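/- arXiv:math/0511751 — 4 statements merged into one kernel-verified Lean document; each statement's English description precedes it below -/
import Mathlib

section
/- Let P be a d-polytope (d ≥ 3), S a simplex facet of P in bounded position, F and N disjoint subsets of the facets adjacent to S with F nonsimple, and let v ∈ N(S; F, N; P). Then the relative interior of S and of every facet in N lies in the interior of conv(P ∪ {v}). -/
open Set
open scoped Classical

noncomputable section

abbrev Pt (d : ℕ) := EuclideanSpace ℝ (Fin d)

/-- A polytope: convex hull of finitely many points. -/
def IsPolytope {d : ℕ} (P : Set (Pt d)) : Prop :=
  ∃ V : Finset (Pt d), P = convexHull ℝ (V : Set (Pt d))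

/-- Faces of a polytope: the polytope itself, the empty set, and exposed faces. -/
def IsFace {d : ℕ} (P F : Set (Pt d)) : Prop :=
  F = P ∨ F = ∅ ∨ ∃ (u : Pt d) (c : ℝ),
    (∀ x ∈ P, c ≤ (inner ℝ u x : ℝ)) ∧ F = {x ∈ P | (inner ℝ u x : ℝ) = c}

/-- Dimension of a face (the empty face has dimension `-1`). -/
def faceDim {d : ℕ} (F : Set (Pt d)) : ℤ :=
  if F = ∅ then -1 else (Module.finrank ℝ (vectorSpan ℝ F) : ℤ)

/-- A full-dimensional polytope in `ℝ^d`. -/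
def IsDPolytope {d : ℕ} (P : Set (Pt d)) : Prop :=
  IsPolytope P ∧ faceDim P = (d : ℤ)

def IsFacet {d : ℕ} (P F : Set (Pt d)) : Prop :=
  IsFace P F ∧ faceDim F = (d : ℤ) - 1

def IsVertex {d : ℕ} (P : Set (Pt d)) (w : Pt d) : Prop :=
  IsFace P {w}

/-- The number of vertices of `P` lying in a given set. -/
def nverts {d : ℕ} (P X : Set (Pt d)) : ℕ :=
  Nat.card {w : Pt d // IsVertex P w ∧ w ∈ X}

/-- Entry `f_k` of the f-vector: the number of `k`-dimensional faces. -/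
def fk {d : ℕ} (k : ℤ) (P : Set (Pt d)) : ℕ :=
  Nat.card {F : Set (Pt d) // IsFace P F ∧ faceDim F = k}

/-- The number of facets of `P` containing the face `G`. -/
def fdeg {d : ℕ} (P G : Set (Pt d)) : ℕ :=
  Nat.card {F : Set (Pt d) // IsFacet P F ∧ G ⊆ F}

/-- `u, c` define the supporting hyperplane of the facet `G` of `P`,
oriented so that `P` lies on the `≥` side. -/
def SupportsFacet {d : ℕ} (P G : Set (Pt d)) (u : Pt d) (c : ℝ) : Prop :=
  (∀ x ∈ P, c ≤ (inner ℝ u x : ℝ)) ∧ G = {x ∈ P | (inner ℝ u x : ℝ) = c}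

/-- Two facets are adjacent if they intersect in a ridge. -/
def AdjacentFacet {d : ℕ} (P S G : Set (Pt d)) : Prop :=
  IsFacet P S ∧ IsFacet P G ∧ S ≠ G ∧ faceDim (S ∩ G) = (d : ℤ) - 2

/-- A simplex facet: a facet with exactly `d` vertices
(combinatorially a `(d-1)`-simplex). -/
def IsSimplexFacet {d : ℕ} (P S : Set (Pt d)) : Prop :=
  IsFacet P S ∧ nverts P S = d

/-- The facet `S` of `P` is in bounded position: the intersection of the
facet halfspaces other than the one of `S` is bounded. -/
def BoundedPosition {d : ℕ} (P S : Set (Pt d)) : Prop :=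
  Bornology.IsBounded {x : Pt d | ∀ G u c, IsFacet P G → G ≠ S →
    SupportsFacet P G u c → c ≤ (inner ℝ u x : ℝ)}

/-- The region `N(S; 𝓕, 𝓝; P)`: points strictly beyond the hyperplanes of
`S` and of the facets in `𝓝`, on the hyperplanes of facets in `𝓕`, and
strictly beneath all other facet hyperplanes of `P`. -/
def PseudoRegion {d : ℕ} (P S : Set (Pt d)) (𝓕 𝓝 : Set (Set (Pt d))) :
    Set (Pt d) :=
  {v | ∀ G u c, IsFacet P G → SupportsFacet P G u c →
    ((G = S ∨ G ∈ 𝓝) → (inner ℝ u v : ℝ) < c) ∧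
    (G ∈ 𝓕 → (inner ℝ u v : ℝ) = c) ∧
    ((G ≠ S ∧ G ∉ 𝓝 ∧ G ∉ 𝓕) → c < (inner ℝ u v : ℝ))}

/-- `𝓕` is nonsimple: there is no pair of adjacent facets in `𝓕` having a
common `(d-3)`-face with `S`. -/
def Nonsimple {d : ℕ} (P S : Set (Pt d)) (𝓕 : Set (Set (Pt d))) : Prop :=
  ¬ ∃ G G' R, G ∈ 𝓕 ∧ G' ∈ 𝓕 ∧ G ≠ G' ∧ AdjacentFacet P G G' ∧
    IsFace P R ∧ faceDim R = (d : ℤ) - 3 ∧ R ⊆ G ∩ G' ∩ S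

/-- The pseudo-stacking of `P` at the point `v`: `conv (P ∪ {v})`. -/
def pseudoStack {d : ℕ} (P : Set (Pt d)) (v : Pt d) : Set (Pt d) :=
  convexHull ℝ (P ∪ {v})

/-- The standing hypotheses of the pseudo-stacking construction. -/
def PseudoStackSetup {d : ℕ} (P S : Set (Pt d)) (𝓕 𝓝 : Set (Set (Pt d))) : Prop :=
  IsDPolytope P ∧ 3 ≤ d ∧ IsSimplexFacet P S ∧ BoundedPosition P S ∧
  (∀ G ∈ 𝓕 ∪ 𝓝, AdjacentFacet P S G) ∧ Disjoint 𝓕 𝓝 ∧ Nonsimple P S 𝓕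


lemma cone_lemma {d : ℕ} (u : Pt d) (c : ℝ) (hu : u ≠ 0) (x q : Pt d)
    (hx : (inner ℝ u x : ℝ) = c) (hq : c < (inner ℝ u q : ℝ)) :
    ∀ ε > 0, ∃ r > 0, ∀ y : Pt d, dist y x < r → c ≤ (inner ℝ u y : ℝ) →
      ∃ y', (inner ℝ u y' : ℝ) = c ∧ dist y' x < ε ∧ y ∈ segment ℝ q y' := by
  intro ε hε
  have hun : 0 < ‖u‖ := norm_pos_iff.2 hu
  set a : ℝ := (inner ℝ u q : ℝ) - c with ha
  have ha0 : 0 < a := by simp only [ha]; linarith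
  set K : ℝ := 2 * ‖u‖ * (1 + ‖x - q‖) / a with hK
  have hK0 : 0 ≤ K := by positivity
  refine ⟨min (a / (2 * ‖u‖)) (min 1 (ε / (K + 2))), by positivity, ?_⟩
  intro y hyx hyc
  rw [dist_eq_norm] at hyx
  have hr1 : ‖y - x‖ < a / (2 * ‖u‖) := lt_of_lt_of_le hyx (min_le_left _ _)
  have hr2 : ‖y - x‖ < 1 := lt_of_lt_of_le hyx ((min_le_right _ _).trans (min_le_left _ _))
  have hr3 : ‖y - x‖ < ε / (K + 2) := lt_of_lt_of_le hyx ((min_le_right _ _).trans (min_le_right _ _))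
  have hiy : (inner ℝ u (y - x) : ℝ) = (inner ℝ u y : ℝ) - c := by rw [inner_sub_right, hx]
  have habs : |(inner ℝ u (y - x) : ℝ)| ≤ ‖u‖ * ‖y - x‖ := abs_real_inner_le_norm u (y - x)
  have hsmall : (inner ℝ u (y - x) : ℝ) ≤ ‖u‖ * ‖y - x‖ := (le_abs_self _).trans habs
  have hsmall2 : ‖u‖ * ‖y - x‖ < a / 2 := by
    calc ‖u‖ * ‖y - x‖ < ‖u‖ * (a / (2 * ‖u‖)) := mul_lt_mul_of_pos_left hr1 hun
    _ = a / 2 := by field_simp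
  set b : ℝ := (inner ℝ u q : ℝ) - (inner ℝ u y : ℝ) with hb
  have hab : a - b = (inner ℝ u (y - x) : ℝ) := by rw [hiy]; simp only [ha, hb]; ring
  have hab0 : 0 ≤ a - b := by rw [hab, hiy]; linarith
  have hb1 : b ≤ a := by linarith
  have hb2 : a / 2 < b := by nlinarith
  have hb0 : 0 < b := by linarith
  refine ⟨q + (a / b) • (y - q), ?_, ?_, ?_⟩
  · rw [inner_add_right, real_inner_smul_right, inner_sub_right]
    have h1 : (inner ℝ u y : ℝ) - inner ℝ u q = -b := by simp only [hb]; ring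
    rw [h1]
    have h2 : a / b * -b = -a := by field_simp
    rw [h2]; simp only [ha]; ring
  · have hyq : ‖y - q‖ ≤ 1 + ‖x - q‖ := by
      calc ‖y - q‖ = ‖(y - x) + (x - q)‖ := by congr 1; abel
      _ ≤ ‖y - x‖ + ‖x - q‖ := norm_add_le _ _
      _ ≤ 1 + ‖x - q‖ := by linarith
    have hdiff : q + (a / b) • (y - q) - y = ((a - b) / b) • (y - q) := by
      have h3 : q + (a / b) • (y - q) - y = (a / b - 1) • (y - q) := by
        rw [sub_smul, one_smul]; abel
      rw [h3]
      congr 1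
      field_simp
    have hnd : ‖q + (a / b) • (y - q) - y‖ ≤ K * ‖y - x‖ := by
      rw [hdiff, norm_smul, Real.norm_eq_abs, abs_of_nonneg (by positivity : (0:ℝ) ≤ (a - b)/b)]
      rw [hK, div_mul_eq_mul_div, div_mul_eq_mul_div, div_le_div_iff₀ hb0 ha0]
      have h1 : (a - b) * ‖y - q‖ ≤ (a - b) * (1 + ‖x - q‖) :=
        mul_le_mul_of_nonneg_left hyq hab0
      have h2 : (a - b) * (1 + ‖x - q‖) ≤ (‖u‖ * ‖y - x‖) * (1 + ‖x - q‖) :=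
        mul_le_mul_of_nonneg_right (hab ▸ hsmall) (by positivity)
      calc (a - b) * ‖y - q‖ * a ≤ (‖u‖ * ‖y - x‖ * (1 + ‖x - q‖)) * a :=
            mul_le_mul_of_nonneg_right (h1.trans h2) ha0.le
        _ ≤ (‖u‖ * ‖y - x‖ * (1 + ‖x - q‖)) * (2 * b) :=
            mul_le_mul_of_nonneg_left (by linarith) (by positivity)
        _ = 2 * ‖u‖ * (1 + ‖x - q‖) * ‖y - x‖ * b := by ring
    have h6 : dist (q + (a / b) • (y - q)) x ≤ dist (q + (a / b) • (y - q)) y + dist y x :=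
      dist_triangle _ _ _
    simp only [dist_eq_norm] at h6 ⊢
    have h7 : (K + 1) * ‖y - x‖ < (K + 1) * (ε / (K + 2)) :=
      mul_lt_mul_of_pos_left hr3 (by positivity)
    have h8 : (K + 1) * (ε / (K + 2)) < ε := by
      rw [mul_div_assoc', div_lt_iff₀ (by positivity : (0:ℝ) < K + 2)]
      have e1 : (K + 1) * ε = K * ε + ε := by ring
      have e2 : ε * (K + 2) = K * ε + 2 * ε := by ring
      linarith
    have h9 : (K + 1) * ‖y - x‖ = K * ‖y - x‖ + ‖y - x‖ := by ring
    linarith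
  · refine ⟨1 - b / a, b / a, ?_, by positivity, by ring, ?_⟩
    · rw [sub_nonneg]; exact (div_le_one ha0).2 hb1
    · have h1 : (b / a) * (a / b) = 1 := by field_simp
      rw [smul_add, smul_smul, h1, one_smul]
      module

lemma intrinsic_ball {d : ℕ} {T : Set (Pt d)} {x : Pt d}
    (hx : x ∈ intrinsicInterior ℝ T) :
    ∃ ε > 0, ∀ z, z ∈ (affineSpan ℝ T : Set (Pt d)) → dist z x < ε → z ∈ T := by
  obtain ⟨y, hy, rfl⟩ := mem_intrinsicInterior.1 hx
  rw [mem_interior_iff_mem_nhds, Metric.mem_nhds_iff] at hy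
  obtain ⟨ε, hε, hball⟩ := hy
  refine ⟨ε, hε, fun z hz hdz => ?_⟩
  have : (⟨z, hz⟩ : affineSpan ℝ T) ∈ Metric.ball y ε := by
    rw [Metric.mem_ball, Subtype.dist_eq]
    exact hdz
  exact hball this

lemma span_eq_hyperplane {d : ℕ} {T : Set (Pt d)} (u : Pt d) (c : ℝ) (hu : u ≠ 0)
    (hTsub : ∀ z ∈ T, (inner ℝ u z : ℝ) = c) {x : Pt d} (hxT : x ∈ T)
    (hdim : Module.finrank ℝ (vectorSpan ℝ T) = d - 1) (hd : 0 < d) :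
    ∀ z : Pt d, (inner ℝ u z : ℝ) = c → z ∈ affineSpan ℝ T := by
  set W : Submodule ℝ (Pt d) := (ℝ ∙ u)ᗮ with hW
  have hmemW : ∀ w : Pt d, w ∈ W ↔ (inner ℝ u w : ℝ) = 0 := by
    intro w
    rw [hW, Submodule.mem_orthogonal_singleton_iff_inner_left]
    constructor
    · intro h; rw [real_inner_comm]; exact h
    · intro h; rw [real_inner_comm]; exact h
  have hWrank : Module.finrank ℝ W = d - 1 := by
    have h1 : Module.finrank ℝ (ℝ ∙ u) = 1 := finrank_span_singleton hu
    have h2 : Module.finrank ℝ (ℝ ∙ u) + Module.finrank ℝ W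
        = Module.finrank ℝ (Pt d) := Submodule.finrank_add_finrank_orthogonal _
    have h3 : Module.finrank ℝ (Pt d) = d := finrank_euclideanSpace_fin
    omega
  set H : AffineSubspace ℝ (Pt d) := AffineSubspace.mk' x W with hH
  have hTH : T ⊆ (H : Set (Pt d)) := by
    intro z hz
    rw [hH, SetLike.mem_coe, AffineSubspace.mem_mk', hmemW]
    have : (z -ᵥ x : Pt d) = z - x := rfl
    rw [this, inner_sub_right, hTsub z hz, hTsub x hxT, sub_self]
  have hle : affineSpan ℝ T ≤ H := affineSpan_le.2 hTH
  have hdirle : (affineSpan ℝ T).direction ≤ H.direction := AffineSubspace.direction_le hle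
  rw [direction_affineSpan, hH, AffineSubspace.direction_mk'] at hdirle
  have hdeq : vectorSpan ℝ T = W :=
    Submodule.eq_of_le_of_finrank_eq hdirle (by rw [hdim, hWrank])
  have hspan_eq : affineSpan ℝ T = H := by
    apply AffineSubspace.ext_of_direction_eq
    · rw [direction_affineSpan, hH, AffineSubspace.direction_mk', hdeq]
    · exact ⟨x, subset_affineSpan ℝ T hxT, AffineSubspace.self_mem_mk' x W⟩
  intro z hz
  rw [hspan_eq, hH]
  rw [AffineSubspace.mem_mk', hmemW]
  have : (z -ᵥ x : Pt d) = z - x := rfl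
  rw [this, inner_sub_right, hz, hTsub x hxT, sub_self]

lemma exists_interior_gt {d : ℕ} {P : Set (Pt d)} (hP : Convex ℝ P)
    (hspan : affineSpan ℝ P = ⊤) (u : Pt d) (c : ℝ) (hu : u ≠ 0)
    (hsup : ∀ z ∈ P, c ≤ (inner ℝ u z : ℝ)) :
    ∃ p ∈ interior P, c < (inner ℝ u p : ℝ) := by
  obtain ⟨p, hp⟩ := (hP.interior_nonempty_iff_affineSpan_eq_top).2 hspan
  have hle : c ≤ (inner ℝ u p : ℝ) := hsup p (interior_subset hp)
  rcases hle.lt_or_eq with h | h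
  · exact ⟨p, hp, h⟩
  · exfalso
    obtain ⟨ε, hε, hball⟩ := Metric.isOpen_iff.1 isOpen_interior p hp
    have hun : 0 < ‖u‖ := norm_pos_iff.2 hu
    set z : Pt d := p - (ε / (2 * ‖u‖)) • u with hz
    have hzmem : z ∈ P := by
      apply interior_subset (hball ?_)
      rw [Metric.mem_ball, hz, dist_eq_norm]
      have : p - (ε / (2 * ‖u‖)) • u - p = -((ε / (2 * ‖u‖)) • u) := by abel
      rw [this, norm_neg, norm_smul, Real.norm_eq_abs,
        abs_of_nonneg (by positivity : (0:ℝ) ≤ ε / (2 * ‖u‖))]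
      have h9 : ε / (2 * ‖u‖) * ‖u‖ = ε / 2 := by field_simp
      rw [h9]
      linarith
    have : (inner ℝ u z : ℝ) = c - (ε / (2 * ‖u‖)) * ‖u‖ ^ 2 := by
      rw [hz, inner_sub_right, real_inner_smul_right, real_inner_self_eq_norm_sq, ← h]
    have hlt : (inner ℝ u z : ℝ) < c := by
      rw [this]
      have : 0 < (ε / (2 * ‖u‖)) * ‖u‖ ^ 2 := by positivity
      linarith
    linarith [hsup z hzmem]

lemma key_relint {d : ℕ} {P T : Set (Pt d)} (hP : Convex ℝ P)
    (hspan : affineSpan ℝ P = ⊤) (u : Pt d) (c : ℝ)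
    (hsup : ∀ z ∈ P, c ≤ (inner ℝ u z : ℝ)) (hT : T = {z ∈ P | (inner ℝ u z : ℝ) = c})
    (hTne : T.Nonempty) (hTdim : Module.finrank ℝ (vectorSpan ℝ T) = d - 1) (hd : 0 < d)
    (v : Pt d) (hv : (inner ℝ u v : ℝ) < c) :
    intrinsicInterior ℝ T ⊆ interior (convexHull ℝ (P ∪ {v})) := by
  have hu : u ≠ 0 := by
    intro h0
    obtain ⟨t, ht⟩ := hTne
    rw [hT] at ht
    have h1 : (inner ℝ u t : ℝ) = c := ht.2
    rw [h0, inner_zero_left] at h1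
    rw [h0, inner_zero_left] at hv
    linarith
  intro x hx
  have hxT : x ∈ T := intrinsicInterior_subset hx
  have hxc : (inner ℝ u x : ℝ) = c := (hT ▸ hxT).2
  obtain ⟨ε, hε, hball⟩ := intrinsic_ball hx
  have hTsub : ∀ z ∈ T, (inner ℝ u z : ℝ) = c := fun z hz => (hT ▸ hz).2
  have hhyper := span_eq_hyperplane u c hu hTsub hxT hTdim hd
  have hZ : ∀ z : Pt d, (inner ℝ u z : ℝ) = c → dist z x < ε → z ∈ T :=
    fun z h1 h2 => hball z (hhyper z h1) h2
  obtain ⟨p, hp, hpc⟩ := exists_interior_gt hP hspan u c hu hsup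
  obtain ⟨r1, hr1, hcone1⟩ := cone_lemma u c hu x p hxc hpc ε hε
  have hxc' : (inner ℝ (-u) x : ℝ) = -c := by rw [inner_neg_left, hxc]
  have hvc' : (-c : ℝ) < (inner ℝ (-u) v : ℝ) := by rw [inner_neg_left]; linarith
  obtain ⟨r2, hr2, hcone2⟩ := cone_lemma (-u) (-c) (neg_ne_zero.2 hu) x v hxc' hvc' ε hε
  set Q := convexHull ℝ (P ∪ {v}) with hQdef
  have hQ : Convex ℝ Q := convex_convexHull ℝ _
  have hPQ : P ⊆ Q := (Set.subset_union_left).trans (subset_convexHull ℝ _)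
  have hvQ : v ∈ Q := subset_convexHull ℝ _ (Set.mem_union_right _ rfl)
  have hTP : T ⊆ P := by rw [hT]; exact fun z hz => hz.1
  rw [mem_interior]
  refine ⟨Metric.ball x (min r1 r2), ?_, Metric.isOpen_ball,
    Metric.mem_ball_self (lt_min hr1 hr2)⟩
  intro y hy
  rw [Metric.mem_ball] at hy
  rcases le_or_gt c (inner ℝ u y : ℝ) with hcy | hcy
  · obtain ⟨y', h1, h2, h3⟩ := hcone1 y (hy.trans_le (min_le_left _ _)) hcy
    exact hQ.segment_subset (hPQ (interior_subset hp)) (hPQ (hTP (hZ y' h1 h2))) h3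
  · have hcy' : (-c : ℝ) ≤ (inner ℝ (-u) y : ℝ) := by rw [inner_neg_left]; linarith
    obtain ⟨y', h1, h2, h3⟩ := hcone2 y (hy.trans_le (min_le_right _ _)) hcy'
    have h1' : (inner ℝ u y' : ℝ) = c := by rw [inner_neg_left] at h1; linarith
    exact hQ.segment_subset hvQ (hPQ (hTP (hZ y' h1' h2))) h3

lemma facet_struct {d : ℕ} (hd : 3 ≤ d) {P T : Set (Pt d)} (hPdim : faceDim P = (d : ℤ))
    (hT : IsFacet P T) :
    ∃ u c, SupportsFacet P T u c ∧ T.Nonempty ∧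
      Module.finrank ℝ (vectorSpan ℝ T) = d - 1 := by
  obtain ⟨hface, hdim⟩ := hT
  have hTne : T.Nonempty := by
    rw [Set.nonempty_iff_ne_empty]
    intro h0
    simp only [faceDim, if_pos h0] at hdim
    omega
  have hrank : Module.finrank ℝ (vectorSpan ℝ T) = d - 1 := by
    simp only [faceDim, if_neg (Set.nonempty_iff_ne_empty.1 hTne)] at hdim
    omega
  rcases hface with h | h | ⟨u, c, h1, h2⟩
  · exfalso
    rw [h, hPdim] at hdim
    omega
  · exact absurd h (Set.nonempty_iff_ne_empty.1 hTne)
  · exact ⟨u, c, ⟨h1, h2⟩, hTne, hrank⟩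

theorem relint_subset_interior_pseudoStack {d : ℕ}
    (P S : Set (Pt d)) (𝓕 𝓝 : Set (Set (Pt d))) (v : Pt d)
    (h : PseudoStackSetup P S 𝓕 𝓝) (hv : v ∈ PseudoRegion P S 𝓕 𝓝) :
    intrinsicInterior ℝ S ⊆ interior (pseudoStack P v) ∧
    ∀ N₀ ∈ 𝓝, intrinsicInterior ℝ N₀ ⊆ interior (pseudoStack P v) := by
  obtain ⟨⟨hPpoly, hPdim⟩, hd3, ⟨hSfacet, _⟩, _, hadj, _, _⟩ := h
  have hd : 0 < d := by omega
  obtain ⟨V, hV⟩ := hPpoly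
  have hPconv : Convex ℝ P := hV ▸ convex_convexHull ℝ _
  have hPne : P.Nonempty := by
    rw [Set.nonempty_iff_ne_empty]
    intro h0
    simp only [faceDim, if_pos h0] at hPdim
    omega
  have hspan : affineSpan ℝ P = ⊤ := by
    rw [AffineSubspace.affineSpan_eq_top_iff_vectorSpan_eq_top_of_nonempty ℝ _ _ hPne]
    apply Submodule.eq_top_of_finrank_eq
    simp only [faceDim, if_neg (Set.nonempty_iff_ne_empty.1 hPne)] at hPdim
    rw [finrank_euclideanSpace_fin]
    exact_mod_cast hPdim
  constructor
  · obtain ⟨u, c, ⟨hsup, hTeq⟩, hTne, hrank⟩ := facet_struct hd3 hPdim hSfacet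
    have hvlt : (inner ℝ u v : ℝ) < c := (hv S u c hSfacet ⟨hsup, hTeq⟩).1 (Or.inl rfl)
    exact key_relint hPconv hspan u c hsup hTeq hTne hrank hd v hvlt
  · intro N₀ hN
    have hfacet : IsFacet P N₀ := (hadj N₀ (Set.mem_union_right _ hN)).2.1
    obtain ⟨u, c, ⟨hsup, hTeq⟩, hTne, hrank⟩ := facet_struct hd3 hPdim hfacet
    have hvlt : (inner ℝ u v : ℝ) < c := (hv N₀ u c hfacet ⟨hsup, hTeq⟩).1 (Or.inr hN)
    exact key_relint hPconv hspan u c hsup hTeq hTne hrank hd v hvlt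
end
end

section
/- Under the hypotheses of the pseudo-stacking construction, for any ridge R between the simplex facet S and a facet in adj(S) \ (F ∪ N), the pseudo-stacked polytope conv(P ∪ {v}) has a facet which is a pyramid over R with apex v. -/
open Set
open scoped Classical

noncomputable section

lemma faceDim_empty {d : ℕ} : faceDim (∅ : Set (Pt d)) = -1 := if_pos rfl

/-- Every facet of a `d`-polytope admits a supporting hyperplane. -/
lemma facet_support' {d : ℕ} {P S : Set (Pt d)} (hd : 3 ≤ d)
    (hP : faceDim P = (d : ℤ)) (hS : IsFacet P S) :
    ∃ u c, SupportsFacet P S u c := by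
  obtain ⟨hface, hdim⟩ := hS
  rcases hface with h | h | ⟨u, c, h1, h2⟩
  · exfalso; rw [h, hP] at hdim; omega
  · exfalso; rw [h, faceDim_empty] at hdim; omega
  · exact ⟨u, c, h1, h2⟩

/-- The hyperplane `⟪u, x⟫ = c` as an affine subspace. -/
def innerHyperplane {d : ℕ} (u : Pt d) (c : ℝ) : AffineSubspace ℝ (Pt d) where
  carrier := {x | (inner ℝ u x : ℝ) = c}
  smul_vsub_vadd_mem' := by
    intro t p1 p2 p3 h1 h2 h3
    simp only [Set.mem_setOf_eq] at *
    have hh : t • (p1 -ᵥ p2) +ᵥ p3 = t • (p1 - p2) + p3 := rfl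
    rw [hh, inner_add_right, real_inner_smul_right, inner_sub_right, h1, h2, h3]
    ring

lemma mem_innerHyperplane {d : ℕ} {u : Pt d} {c : ℝ} {x : Pt d} :
    x ∈ innerHyperplane u c ↔ (inner ℝ u x : ℝ) = c := Iff.rfl

lemma finrank_span_singleton_sup {d : ℕ} (K : Submodule ℝ (Pt d)) (w : Pt d)
    (hw : w ∉ K) :
    Module.finrank ℝ ↥(Submodule.span ℝ {w} ⊔ K) = Module.finrank ℝ ↥K + 1 := by
  have hw0 : w ≠ 0 := by rintro rfl; exact hw K.zero_mem
  have hinf : Submodule.span ℝ {w} ⊓ K = ⊥ := by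
    rw [Submodule.eq_bot_iff]
    rintro x ⟨hx1, hx2⟩
    obtain ⟨a, rfl⟩ := Submodule.mem_span_singleton.mp hx1
    by_cases ha : a = 0
    · simp [ha]
    · exact absurd (by simpa [ha] using K.smul_mem a⁻¹ hx2) hw
  have := Submodule.finrank_sup_add_finrank_inf_eq (Submodule.span ℝ {w}) K
  rw [hinf, finrank_span_singleton hw0] at this
  simp only [finrank_bot, add_zero] at this
  omega

theorem pyramid_facet_of_pseudoStack {d : ℕ}
    (P S : Set (Pt d)) (𝓕 𝓝 : Set (Set (Pt d))) (v : Pt d) (G : Set (Pt d))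
    (h : PseudoStackSetup P S 𝓕 𝓝) (hv : v ∈ PseudoRegion P S 𝓕 𝓝)
    (hGadj : AdjacentFacet P S G) (hGF : G ∉ 𝓕) (hGN : G ∉ 𝓝) :
    v ∉ affineSpan ℝ (S ∩ G) ∧
    IsFacet (pseudoStack P v) (convexHull ℝ ((S ∩ G) ∪ {v})) := by
  obtain ⟨⟨hPpoly, hPdim⟩, hd3, _hSsimp, _hbdd, _hadj, _hdisj, _hns⟩ := h
  obtain ⟨hSfacet, hGfacet, hSneG, hridge⟩ := hGadj
  obtain ⟨uS, cS, hSsupp⟩ := facet_support' hd3 hPdim hSfacet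
  obtain ⟨uG, cG, hGsupp⟩ := facet_support' hd3 hPdim hGfacet
  have hvS : (inner ℝ uS v : ℝ) < cS := (hv S uS cS hSfacet hSsupp).1 (Or.inl rfl)
  have hvG : cG < (inner ℝ uG v : ℝ) :=
    (hv G uG cG hGfacet hGsupp).2.2 ⟨fun hh => hSneG hh.symm, hGN, hGF⟩
  have hSsub : S ⊆ P := by rw [hSsupp.2]; exact fun x hx => hx.1
  have hSmem : ∀ x ∈ S, (inner ℝ uS x : ℝ) = cS := by
    rw [hSsupp.2]; exact fun x hx => hx.2
  have hGmem : ∀ x ∈ G, (inner ℝ uG x : ℝ) = cG := by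
    rw [hGsupp.2]; exact fun x hx => hx.2
  -- Part 1 : v is not in the affine span of the ridge
  have hvnot : v ∉ affineSpan ℝ (S ∩ G) := by
    intro hmem
    have hle : affineSpan ℝ (S ∩ G) ≤ innerHyperplane uS cS := by
      rw [affineSpan_le]
      exact fun x hx => hSmem x hx.1
    exact absurd (hle hmem : (inner ℝ uS v : ℝ) = cS) (ne_of_lt hvS)
  refine ⟨hvnot, ?_⟩
  -- Setting up the supporting hyperplane of the new facet
  · set lam : ℝ := (inner ℝ uG v : ℝ) - cG with hlam
    set mu : ℝ := cS - (inner ℝ uS v : ℝ) with hmu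
    have hlam0 : 0 < lam := by simp only [hlam]; linarith
    have hmu0 : 0 < mu := by simp only [hmu]; linarith
    set w : Pt d := lam • uS + mu • uG with hw
    set c : ℝ := lam * cS + mu * cG with hc
    have hinnerw : ∀ x : Pt d,
        (inner ℝ w x : ℝ) = lam * (inner ℝ uS x : ℝ) + mu * (inner ℝ uG x : ℝ) := by
      intro x
      rw [hw, inner_add_left, real_inner_smul_left, real_inner_smul_left]
    have hwv : (inner ℝ w v : ℝ) = c := by
      rw [hinnerw, hc, hlam, hmu]; ring
    have hPge : ∀ p ∈ P, c ≤ (inner ℝ w p : ℝ) := by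
      intro p hp
      have h1 := hSsupp.1 p hp
      have h2 := hGsupp.1 p hp
      rw [hinnerw, hc]
      nlinarith
    have hQge : ∀ x ∈ pseudoStack P v, c ≤ (inner ℝ w x : ℝ) := by
      intro x hx
      have hconv : Convex ℝ {x : Pt d | c ≤ (inner ℝ w x : ℝ)} :=
        convex_halfSpace_ge
          ⟨fun a b => inner_add_right _ _ _, fun t a => real_inner_smul_right _ _ _⟩ c
      have hsub : P ∪ {v} ⊆ {x : Pt d | c ≤ (inner ℝ w x : ℝ)} := by
        rintro x (hx | rfl)
        · exact hPge x hx
        · exact le_of_eq hwv.symm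
      exact convexHull_min hsub hconv hx
    -- The new face equals the pyramid over the ridge
    have hPconv : Convex ℝ P := by
      obtain ⟨V, rfl⟩ := hPpoly; exact convex_convexHull ℝ _
    have hPne : P.Nonempty := by
      rcases Set.eq_empty_or_nonempty P with he | hne
      · exfalso; rw [he, faceDim_empty] at hPdim; omega
      · exact hne
    have hRmem : ∀ x ∈ S ∩ G, (inner ℝ w x : ℝ) = c := by
      intro x hx
      rw [hinnerw, hSmem x hx.1, hGmem x hx.2, hc]
    have hRsubQ : S ∩ G ∪ {v} ⊆ pseudoStack P v := by
      rintro x (hx | rfl)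
      · exact subset_convexHull ℝ _ (Or.inl (hSsub hx.1))
      · exact subset_convexHull ℝ _ (Or.inr rfl)
    have hFeq : convexHull ℝ ((S ∩ G) ∪ {v}) =
        {x ∈ pseudoStack P v | (inner ℝ w x : ℝ) = c} := by
      apply Subset.antisymm
      · -- conv(R ∪ {v}) ⊆ face
        have hconvF : Convex ℝ {x ∈ pseudoStack P v | (inner ℝ w x : ℝ) = c} := by
          intro x hx y hy a b ha hb hab
          refine ⟨(convex_convexHull ℝ _) hx.1 hy.1 ha hb hab, ?_⟩
          have : (inner ℝ w (a • x + b • y) : ℝ)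
              = a * (inner ℝ w x : ℝ) + b * (inner ℝ w y : ℝ) := by
            rw [inner_add_right, real_inner_smul_right, real_inner_smul_right]
          rw [this, hx.2, hy.2, ← add_mul, hab, one_mul]
        apply convexHull_min _ hconvF
        rintro x (hx | rfl)
        · exact ⟨hRsubQ (Or.inl hx), hRmem x hx⟩
        · exact ⟨hRsubQ (Or.inr rfl), hwv⟩
      · -- face ⊆ conv(R ∪ {v})
        rintro x ⟨hxQ, hxw⟩
        have hQjoin : pseudoStack P v = convexJoin ℝ P {v} := by
          rw [pseudoStack, convexHull_union hPne (Set.singleton_nonempty v),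
            hPconv.convexHull_eq, convexHull_singleton]
        rw [hQjoin, mem_convexJoin] at hxQ
        obtain ⟨p, hp, q, hq, hseg⟩ := hxQ
        rw [Set.mem_singleton_iff] at hq
        rw [hq] at hseg
        obtain ⟨a, b, ha, hb, hab, rfl⟩ := hseg
        have hxinner : (inner ℝ w (a • p + b • v) : ℝ)
            = a * (inner ℝ w p : ℝ) + b * c := by
          rw [inner_add_right, real_inner_smul_right, real_inner_smul_right, hwv]
        rw [hxinner] at hxw
        rcases eq_or_lt_of_le ha with ha0 | ha0
        · have hb1 : b = 1 := by linarith
          have : a • p + b • v = v := by rw [← ha0, hb1]; simp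
          rw [this]
          exact subset_convexHull ℝ _ (Or.inr rfl)
        · have h5 : a * ((inner ℝ w p : ℝ) - c) = 0 := by
            linear_combination hxw - c * hab
          have hpc : (inner ℝ w p : ℝ) = c := by
            have := (mul_eq_zero.mp h5).resolve_left (ne_of_gt ha0)
            linarith
          have h1 := hSsupp.1 p hp
          have h2 := hGsupp.1 p hp
          rw [hinnerw, hc] at hpc
          have e1 : 0 ≤ lam * ((inner ℝ uS p : ℝ) - cS) :=
            mul_nonneg hlam0.le (by linarith)
          have e2 : 0 ≤ mu * ((inner ℝ uG p : ℝ) - cG) :=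
            mul_nonneg hmu0.le (by linarith)
          have e3 : lam * ((inner ℝ uS p : ℝ) - cS) + mu * ((inner ℝ uG p : ℝ) - cG) = 0 := by
            linear_combination hpc
          have e4 : lam * ((inner ℝ uS p : ℝ) - cS) = 0 := by linarith
          have e5 : mu * ((inner ℝ uG p : ℝ) - cG) = 0 := by linarith
          have hpS : (inner ℝ uS p : ℝ) = cS := by
            have := (mul_eq_zero.mp e4).resolve_left (ne_of_gt hlam0)
            linarith
          have hpG : (inner ℝ uG p : ℝ) = cG := by
            have := (mul_eq_zero.mp e5).resolve_left (ne_of_gt hmu0)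
            linarith
          have hpR : p ∈ (S ∩ G : Set (Pt d)) := by
            constructor
            · rw [hSsupp.2]; exact ⟨hp, hpS⟩
            · rw [hGsupp.2]; exact ⟨hp, hpG⟩
          have hpmem : p ∈ (S ∩ G : Set (Pt d)) ∪ {v} := Set.mem_union_left _ hpR
          have hvmem : v ∈ (S ∩ G : Set (Pt d)) ∪ {v} := Set.mem_union_right _ rfl
          exact segment_subset_convexHull hpmem hvmem ⟨a, b, ha, hb, hab, rfl⟩
    refine ⟨Or.inr (Or.inr ⟨w, c, hQge, hFeq⟩), ?_⟩
    · have hvF : v ∈ convexHull ℝ ((S ∩ G) ∪ {v}) :=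
        subset_convexHull ℝ _ (Or.inr rfl)
      have hFne : convexHull ℝ ((S ∩ G) ∪ {v}) ≠ ∅ :=
        Set.nonempty_iff_ne_empty.mp ⟨v, hvF⟩
      rw [faceDim, if_neg hFne]
      -- vectorSpan of the hull equals vectorSpan of the set
      have hvs : vectorSpan ℝ (convexHull ℝ ((S ∩ G) ∪ {v}))
          = vectorSpan ℝ ((S ∩ G) ∪ {v}) := by
        rw [← direction_affineSpan, ← direction_affineSpan,
          affineSpan_convexHull]
      rw [hvs]
      -- the ridge is nonempty and (d-2)-dimensional
      have hRne : (S ∩ G : Set (Pt d)).Nonempty := by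
        rcases Set.eq_empty_or_nonempty (S ∩ G : Set (Pt d)) with he | hne
        · exfalso; rw [he, faceDim_empty] at hridge; omega
        · exact hne
      obtain ⟨p₀, hp₀⟩ := hRne
      have hRne' : (S ∩ G : Set (Pt d)) ≠ ∅ :=
        Set.nonempty_iff_ne_empty.mp ⟨p₀, hp₀⟩
      rw [faceDim, if_neg hRne'] at hridge
      have hRrank : Module.finrank ℝ ↥(vectorSpan ℝ (S ∩ G : Set (Pt d))) = d - 2 := by
        omega
      -- write the union as an insert and compute the span
      have hins : (S ∩ G : Set (Pt d)) ∪ {v} = insert v (S ∩ G) :=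
        Set.union_singleton
      rw [hins]
      have hp₀span : p₀ ∈ affineSpan ℝ (S ∩ G : Set (Pt d)) := mem_affineSpan ℝ hp₀
      have hdir : vectorSpan ℝ (insert v (S ∩ G : Set (Pt d)))
          = Submodule.span ℝ {v -ᵥ p₀} ⊔ vectorSpan ℝ (S ∩ G : Set (Pt d)) := by
        rw [← direction_affineSpan, ← affineSpan_insert_affineSpan,
          AffineSubspace.direction_affineSpan_insert hp₀span, direction_affineSpan]
      have hwnotin : v -ᵥ p₀ ∉ vectorSpan ℝ (S ∩ G : Set (Pt d)) := by
        intro hmem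
        apply hvnot
        rw [← direction_affineSpan] at hmem
        exact (AffineSubspace.vsub_right_mem_direction_iff_mem hp₀span v).mp hmem
      rw [hdir, finrank_span_singleton_sup _ _ hwnotin, hRrank]
      omega
end
end

section
/- Let P be a d-polytope (d ≥ 3), S a simplex facet in bounded position, F, N disjoint subsets of facets adjacent to S with F nonsimple. A k-face G of P (0 ≤ k ≤ d−2) is again a face of the pseudo-stacked polytope conv(P ∪ {v}) if and only if there is a facet of P not in F ∪ N ∪ {S} that contains G. -/
open Set
open scoped Classical

noncomputable section

lemma convex_halfGe {d : ℕ} (u : Pt d) (c : ℝ) : Convex ℝ {x : Pt d | c ≤ (inner ℝ u x : ℝ)} := by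
  intro x hx y hy a b ha hb hab
  simp only [mem_setOf_eq] at *
  rw [inner_add_right, real_inner_smul_right, real_inner_smul_right]
  have h1 : a*c + b*c = c := by linear_combination c * hab
  have h2 := mul_le_mul_of_nonneg_left hx ha
  have h3 := mul_le_mul_of_nonneg_left hy hb
  linarith

lemma convex_hyper {d : ℕ} (u : Pt d) (c : ℝ) : Convex ℝ {x : Pt d | (inner ℝ u x : ℝ) = c} := by
  intro x hx y hy a b ha hb hab
  simp only [mem_setOf_eq] at *
  rw [inner_add_right, real_inner_smul_right, real_inner_smul_right, hx, hy]
  linear_combination c * hab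

lemma inner_centerMass {d : ℕ} (u : Pt d) (V : Finset (Pt d)) (w : Pt d → ℝ)
    (hw : ∑ y ∈ V, w y = 1) :
    (inner ℝ u (V.centerMass w id) : ℝ) = ∑ y ∈ V, w y * (inner ℝ u y : ℝ) := by
  rw [Finset.centerMass_eq_of_sum_1 _ _ hw, inner_sum]
  exact Finset.sum_congr rfl fun y _ => real_inner_smul_right u y (w y)

lemma exposed_eq_hull {d : ℕ} (V : Finset (Pt d)) (u : Pt d) (c : ℝ)
    (hc : ∀ p ∈ V, c ≤ (inner ℝ u p : ℝ)) :
    {x ∈ convexHull ℝ (V : Set (Pt d)) | (inner ℝ u x : ℝ) = c}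
      = convexHull ℝ ((V.filter (fun p => (inner ℝ u p : ℝ) = c) : Finset (Pt d)) : Set (Pt d)) := by
  apply Subset.antisymm
  · rintro x ⟨hxP, hxc⟩
    rw [Finset.convexHull_eq] at hxP
    obtain ⟨w, hw0, hw1, hwx⟩ := hxP
    have hkey : ∀ y ∈ V, w y * ((inner ℝ u y : ℝ) - c) = 0 := by
      have hsum : ∑ y ∈ V, w y * ((inner ℝ u y : ℝ) - c) = 0 := by
        have : (inner ℝ u x : ℝ) = ∑ y ∈ V, w y * (inner ℝ u y : ℝ) := by
          rw [← hwx]; exact inner_centerMass u V w hw1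
        have hsc : ∑ y ∈ V, w y * c = c := by
          rw [← Finset.sum_mul, hw1, one_mul]
        simp only [mul_sub]
        rw [Finset.sum_sub_distrib, hsc, ← this, hxc, sub_self]
      rw [Finset.sum_eq_zero_iff_of_nonneg] at hsum
      · exact hsum
      · intro y hy
        exact mul_nonneg (hw0 y hy) (by linarith [hc y hy])
    -- restrict to the filter
    have hsub : V.filter (fun y => w y ≠ 0) ⊆ V.filter (fun p => (inner ℝ u p : ℝ) = c) := by
      intro y hy
      rw [Finset.mem_filter] at hy ⊢
      refine ⟨hy.1, ?_⟩
      have := hkey y hy.1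
      rcases mul_eq_zero.1 this with h | h
      · exact absurd h hy.2
      · linarith
    have hx' : x ∈ convexHull ℝ ((V.filter (fun y => w y ≠ 0) : Finset (Pt d)) : Set (Pt d)) := by
      rw [Finset.convexHull_eq]
      refine ⟨w, fun y hy => hw0 y (Finset.mem_filter.1 hy).1, ?_, ?_⟩
      · rw [Finset.sum_filter_ne_zero]; exact hw1
      · rw [Finset.centerMass_filter_ne_zero]; exact hwx
    exact convexHull_mono (by exact_mod_cast hsub) hx'
  · apply convexHull_min
    · intro p hp
      simp only [Finset.coe_filter, mem_setOf_eq] at hp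
      exact ⟨subset_convexHull ℝ _ hp.1, hp.2⟩
    · exact Convex.inter (convex_convexHull ℝ _) (convex_hyper u c)

lemma mem_orthogonal_span {d : ℕ} {s : Set (Pt d)} {w : Pt d}
    (h : ∀ v ∈ s, (inner ℝ w v : ℝ) = 0) : w ∈ (Submodule.span ℝ s)ᗮ := by
  have hle : Submodule.span ℝ s ≤ (Submodule.span ℝ ({w} : Set (Pt d)))ᗮ := by
    rw [Submodule.span_le]
    intro v hv
    exact Submodule.mem_orthogonal_singleton_iff_inner_right.2 (h v hv)
  rw [Submodule.mem_orthogonal]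
  intro v hv
  have := hle hv
  rw [Submodule.mem_orthogonal_singleton_iff_inner_right] at this
  rwa [real_inner_comm] at this

lemma orthogonal_exists_ne_zero {d : ℕ} (U : Submodule ℝ (Pt d))
    (h : Module.finrank ℝ U < d) : ∃ w : Pt d, w ∈ Uᗮ ∧ w ≠ 0 := by
  have h1 : Module.finrank ℝ U + Module.finrank ℝ Uᗮ = d := by
    rw [Submodule.finrank_add_finrank_orthogonal]
    exact finrank_euclideanSpace_fin
  have h2 : 0 < Module.finrank ℝ Uᗮ := by omega
  have h3 : Uᗮ ≠ ⊥ := by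
    intro hbot
    rw [hbot, finrank_bot] at h2
    exact lt_irrefl 0 h2
  obtain ⟨w, hw, hw0⟩ := Submodule.exists_mem_ne_zero_of_ne_bot h3
  exact ⟨w, hw, hw0⟩

section AuxRotation

variable {d : ℕ}

lemma halfspace_support {P : Set (Pt d)} (V : Finset (Pt d))
    (hP : P = convexHull ℝ (V : Set (Pt d))) (u : Pt d) (c : ℝ)
    (hc : ∀ p ∈ V, c ≤ (inner ℝ u p : ℝ)) :
    ∀ x ∈ P, c ≤ (inner ℝ u x : ℝ) := by
  intro x hx
  rw [hP] at hx
  exact convexHull_min (fun p hp => hc p hp) (convex_halfGe u c) hx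

lemma exists_facet_beyond {P : Set (Pt d)} (V : Finset (Pt d)) (hV : V.Nonempty)
    (hP : P = convexHull ℝ (V : Set (Pt d)))
    (hdim : Module.finrank ℝ (vectorSpan ℝ (V : Set (Pt d))) = d)
    {z : Pt d} (hz : z ∉ P) :
    ∃ F u c, IsFacet P F ∧ SupportsFacet P F u c ∧ (inner ℝ u z : ℝ) < c := by
  classical
  have hPconv : Convex ℝ P := hP ▸ convex_convexHull ℝ _
  have hPclosed : IsClosed P := hP ▸ V.finite_toSet.isClosed_convexHull (𝕜 := ℝ)
  set m : Pt d → ℝ := fun u => V.inf' hV (fun p => (inner ℝ u p : ℝ)) with hm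
  set T : Pt d → Finset (Pt d) := fun u => V.filter (fun p => (inner ℝ u p : ℝ) = m u) with hT
  have hmle : ∀ (u : Pt d), ∀ p ∈ V, m u ≤ (inner ℝ u p : ℝ) := by
    intro u p hp; exact Finset.inf'_le _ hp
  have hsupp : ∀ u : Pt d, ∀ x ∈ P, m u ≤ (inner ℝ u x : ℝ) := fun u =>
    halfspace_support V hP u (m u) (hmle u)
  have hTne : ∀ u : Pt d, (T u).Nonempty := by
    intro u
    obtain ⟨p, hp, hep⟩ := Finset.exists_mem_eq_inf' hV (fun p => (inner ℝ u p : ℝ))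
    exact ⟨p, Finset.mem_filter.2 ⟨hp, hep.symm⟩⟩
  have hFhull : ∀ u : Pt d,
      {x ∈ P | (inner ℝ u x : ℝ) = m u} = convexHull ℝ ((T u : Finset (Pt d)) : Set (Pt d)) := by
    intro u
    rw [hP]
    exact exposed_eq_hull V u (m u) (hmle u)
  suffices H : ∀ n : ℕ, ∀ u : Pt d, (inner ℝ u z : ℝ) < m u → V.card - (T u).card ≤ n →
      ∃ F u' c, IsFacet P F ∧ SupportsFacet P F u' c ∧ (inner ℝ u' z : ℝ) < c by
    obtain ⟨f, r, hfP, hfz⟩ := geometric_hahn_banach_closed_point hPconv hPclosed hz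
    set u := -((InnerProductSpace.toDual ℝ (Pt d)).symm f) with hu
    have hux : ∀ x : Pt d, (inner ℝ u x : ℝ) = - f x := by
      intro x
      rw [hu, inner_neg_left, InnerProductSpace.toDual_symm_apply]
    refine H V.card u ?_ (by omega)
    obtain ⟨p0, hp0V, hmeq⟩ := Finset.exists_mem_eq_inf' hV (fun p => (inner ℝ u p : ℝ))
    have hp0P : p0 ∈ P := by rw [hP]; exact subset_convexHull ℝ _ hp0V
    have h1 : f p0 < r := hfP p0 hp0P
    have h2 : m u = (inner ℝ u p0 : ℝ) := hmeq
    rw [hux] at h2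
    rw [hux, h2]
    linarith
  intro n
  induction n using Nat.strong_induction_on with
  | _ n IH =>
  intro u hsep hcard
  obtain ⟨p₀, hp₀T⟩ := hTne u
  have hp₀V : p₀ ∈ V := (Finset.mem_filter.1 hp₀T).1
  have hp₀m : (inner ℝ u p₀ : ℝ) = m u := (Finset.mem_filter.1 hp₀T).2
  have hu0 : u ≠ 0 := by
    rintro rfl
    rw [inner_zero_left] at hsep
    rw [inner_zero_left] at hp₀m
    linarith
  -- the span of T u is contained in the hyperplane through the origin orthogonal to u
  have hTspan : vectorSpan ℝ ((T u : Finset (Pt d)) : Set (Pt d))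
      ≤ (Submodule.span ℝ ({u} : Set (Pt d)))ᗮ := by
    rw [vectorSpan_eq_span_vsub_set_right ℝ (Finset.mem_coe.2 hp₀T)]
    rw [Submodule.span_le]
    rintro v ⟨q, hq, rfl⟩
    have hq' : (inner ℝ u q : ℝ) = m u := (Finset.mem_filter.1 (Finset.mem_coe.1 hq)).2
    apply Submodule.mem_orthogonal_singleton_iff_inner_right.2
    simp only [vsub_eq_sub]
    rw [inner_sub_right, hq', hp₀m, sub_self]
  have hperp_rank : Module.finrank ℝ ((Submodule.span ℝ ({u} : Set (Pt d)))ᗮ) + 1 = d := by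
    have h1 : Module.finrank ℝ (Submodule.span ℝ ({u} : Set (Pt d))) = 1 :=
      finrank_span_singleton hu0
    have h2 := Submodule.finrank_add_finrank_orthogonal
      (K := Submodule.span ℝ ({u} : Set (Pt d)))
    rw [h1, finrank_euclideanSpace_fin] at h2
    omega
  have hrle : Module.finrank ℝ (vectorSpan ℝ ((T u : Finset (Pt d)) : Set (Pt d))) + 1 ≤ d := by
    have := Submodule.finrank_mono hTspan
    omega
  by_cases hr : Module.finrank ℝ (vectorSpan ℝ ((T u : Finset (Pt d)) : Set (Pt d))) + 1 = d
  · -- we found a facet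
    refine ⟨{x ∈ P | (inner ℝ u x : ℝ) = m u}, u, m u, ⟨?_, ?_⟩, ⟨hsupp u, rfl⟩, hsep⟩
    · exact Or.inr (Or.inr ⟨u, m u, hsupp u, rfl⟩)
    · have hFne : {x ∈ P | (inner ℝ u x : ℝ) = m u} ≠ ∅ := by
        intro hemp
        have hp₀P : p₀ ∈ P := by rw [hP]; exact subset_convexHull ℝ _ hp₀V
        have : p₀ ∈ ({x ∈ P | (inner ℝ u x : ℝ) = m u} : Set (Pt d)) := ⟨hp₀P, hp₀m⟩
        rw [hemp] at this
        exact this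
      rw [faceDim, if_neg hFne]
      have hvs : vectorSpan ℝ ({x ∈ P | (inner ℝ u x : ℝ) = m u} : Set (Pt d))
          = vectorSpan ℝ ((T u : Finset (Pt d)) : Set (Pt d)) := by
        rw [hFhull u, ← direction_affineSpan, affineSpan_convexHull, direction_affineSpan]
      rw [hvs]
      have : (Module.finrank ℝ (vectorSpan ℝ ((T u : Finset (Pt d)) : Set (Pt d))) : ℤ)
          + 1 = (d : ℤ) := by exact_mod_cast congrArg (fun n : ℕ => (n : ℤ)) hr
      omega
  · -- rotate u to catch one more vertex
    set U := Submodule.span ℝ ((fun q => q - p₀) '' (insert z ((T u : Finset (Pt d)) : Set (Pt d)))) with hU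
    have hUrank : Module.finrank ℝ U < d := by
      have himg : (fun q => q - p₀) '' (insert z ((T u : Finset (Pt d)) : Set (Pt d)))
          = insert (z - p₀) ((fun q => q - p₀) '' ((T u : Finset (Pt d)) : Set (Pt d))) :=
        Set.image_insert_eq
      have hsp : U = (Submodule.span ℝ ({z - p₀} : Set (Pt d)))
          ⊔ Submodule.span ℝ ((fun q => q - p₀) '' ((T u : Finset (Pt d)) : Set (Pt d))) := by
        rw [hU, himg, Submodule.span_insert]
      have hTeq : Submodule.span ℝ ((fun q => q - p₀) '' ((T u : Finset (Pt d)) : Set (Pt d)))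
          = vectorSpan ℝ ((T u : Finset (Pt d)) : Set (Pt d)) := by
        rw [vectorSpan_eq_span_vsub_set_right ℝ (Finset.mem_coe.2 hp₀T)]
        rfl
      have h1 : Module.finrank ℝ (Submodule.span ℝ ({z - p₀} : Set (Pt d))) ≤ 1 := by
        by_cases hzp : z - p₀ = 0
        · rw [hzp, Submodule.span_zero_singleton]
          simp
        · rw [finrank_span_singleton hzp]
      have h2 := Submodule.finrank_sup_add_finrank_inf_eq
        (Submodule.span ℝ ({z - p₀} : Set (Pt d)))
        (Submodule.span ℝ ((fun q => q - p₀) '' ((T u : Finset (Pt d)) : Set (Pt d))))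
      rw [hTeq] at h2
      rw [hsp, hTeq]
      omega
    obtain ⟨w, hwU, hw0⟩ := orthogonal_exists_ne_zero U hUrank
    have hwperp : ∀ y ∈ insert z ((T u : Finset (Pt d)) : Set (Pt d)), (inner ℝ w (y - p₀) : ℝ) = 0 := by
      intro y hy
      have : (y - p₀) ∈ U := by
        rw [hU]
        exact Submodule.subset_span ⟨y, hy, rfl⟩
      have := (Submodule.mem_orthogonal U w).1 hwU _ this
      rwa [real_inner_comm] at this
    have hwz : (inner ℝ w (z - p₀) : ℝ) = 0 := hwperp z (Set.mem_insert _ _)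
    have hwT : ∀ q ∈ T u, (inner ℝ w (q - p₀) : ℝ) = 0 := fun q hq =>
      hwperp q (Set.mem_insert_of_mem _ (Finset.mem_coe.2 hq))
    -- some vertex is not orthogonal to w
    have hexists : ∃ p ∈ V, (inner ℝ w (p - p₀) : ℝ) ≠ 0 := by
      by_contra hall
      push_neg at hall
      have hwo : w ∈ (vectorSpan ℝ (V : Set (Pt d)))ᗮ := by
        rw [vectorSpan_eq_span_vsub_set_right ℝ (Finset.mem_coe.2 hp₀V)]
        apply mem_orthogonal_span
        rintro v ⟨p, hp, rfl⟩
        simp only [vsub_eq_sub]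
        exact hall p (Finset.mem_coe.1 hp)
      have htop : vectorSpan ℝ (V : Set (Pt d)) = ⊤ :=
        Submodule.eq_top_of_finrank_eq (by rw [hdim, finrank_euclideanSpace_fin])
      rw [htop, Submodule.top_orthogonal_eq_bot] at hwo
      exact hw0 (Submodule.mem_bot ℝ |>.1 hwo)
    -- reduce to the case of a direction with a strictly negative vertex
    have key : ∀ w' : Pt d, (∀ q ∈ T u, (inner ℝ w' (q - p₀) : ℝ) = 0) →
        (inner ℝ w' (z - p₀) : ℝ) = 0 → (∃ p ∈ V, (inner ℝ w' (p - p₀) : ℝ) < 0) →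
        ∃ F u' c, IsFacet P F ∧ SupportsFacet P F u' c ∧ (inner ℝ u' z : ℝ) < c := by
      intro w hwT hwz hex
      obtain ⟨p₁, hp₁V, hp₁neg⟩ := hex
      set B := V.filter (fun p => (inner ℝ w (p - p₀) : ℝ) < 0) with hB
      have hBne : B.Nonempty := ⟨p₁, Finset.mem_filter.2 ⟨hp₁V, hp₁neg⟩⟩
      have hBV : ∀ p ∈ B, p ∈ V := fun p hp => (Finset.mem_filter.1 hp).1
      have hBneg : ∀ p ∈ B, (inner ℝ w (p - p₀) : ℝ) < 0 := fun p hp => (Finset.mem_filter.1 hp).2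
      have hBnotT : ∀ p ∈ B, m u < (inner ℝ u p : ℝ) := by
        intro p hp
        have h1 : m u ≤ (inner ℝ u p : ℝ) := hmle u p (hBV p hp)
        rcases lt_or_eq_of_le h1 with h | h
        · exact h
        · exfalso
          have hpT : p ∈ T u := Finset.mem_filter.2 ⟨hBV p hp, h.symm⟩
          have := hwT p hpT
          linarith [hBneg p hp]
      set τ : Pt d → ℝ := fun p => ((inner ℝ u p : ℝ) - m u) / (-(inner ℝ w (p - p₀) : ℝ)) with hτ
      set t := B.inf' hBne τ with ht
      have ht_pos : 0 < t := by
        rw [ht, Finset.lt_inf'_iff]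
        intro p hp
        exact div_pos (by linarith [hBnotT p hp]) (by linarith [hBneg p hp])
      set u' := u + t • w with hu'
      have hval : ∀ x : Pt d, (inner ℝ u' x : ℝ) = (inner ℝ u x : ℝ) + t * (inner ℝ w x : ℝ) := by
        intro x
        rw [hu', inner_add_left, real_inner_smul_left]
      set c' := m u + t * (inner ℝ w p₀ : ℝ) with hc'
      have hVineq : ∀ p ∈ V, c' ≤ (inner ℝ u' p : ℝ) := by
        intro p hpV
        have h1 : m u ≤ (inner ℝ u p : ℝ) := hmle u p hpV
        have hsplit : (inner ℝ u' p : ℝ) - c' = ((inner ℝ u p : ℝ) - m u) + t * (inner ℝ w (p - p₀) : ℝ) := by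
          rw [hval, inner_sub_right, hc']
          ring
        by_cases hcneg : (inner ℝ w (p - p₀) : ℝ) < 0
        · have hpB : p ∈ B := Finset.mem_filter.2 ⟨hpV, hcneg⟩
          have hle : t ≤ τ p := ht ▸ Finset.inf'_le τ hpB
          have hbpos : 0 < -(inner ℝ w (p - p₀) : ℝ) := by linarith
          rw [hτ] at hle
          rw [le_div_iff₀ hbpos] at hle
          linarith
        · push_neg at hcneg
          have := mul_nonneg ht_pos.le hcneg
          linarith
      have hp₀u' : (inner ℝ u' p₀ : ℝ) = c' := by
        rw [hval, hp₀m, hc']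
      have hmu' : m u' = c' := by
        apply le_antisymm
        · calc m u' ≤ (inner ℝ u' p₀ : ℝ) := Finset.inf'_le _ hp₀V
            _ = c' := hp₀u'
        · show c' ≤ V.inf' hV fun p => (inner ℝ u' p : ℝ)
          rw [Finset.le_inf'_iff]
          exact hVineq
      have hTsub : T u ⊆ T u' := by
        intro q hq
        have hqV : q ∈ V := (Finset.mem_filter.1 hq).1
        have hqm : (inner ℝ u q : ℝ) = m u := (Finset.mem_filter.1 hq).2
        refine Finset.mem_filter.2 ⟨hqV, ?_⟩
        rw [hmu', hval, hc']
        have h0 := hwT q hq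
        rw [inner_sub_right] at h0
        have : (inner ℝ w q : ℝ) = (inner ℝ w p₀ : ℝ) := by linarith
        rw [hqm, this]
      obtain ⟨pstar, hpsB, hpseq⟩ := Finset.exists_mem_eq_inf' hBne τ
      have hpsV : pstar ∈ V := hBV pstar hpsB
      have hpsnotT : pstar ∉ T u := by
        intro hmem
        have := hwT pstar hmem
        linarith [hBneg pstar hpsB]
      have hpsT' : pstar ∈ T u' := by
        refine Finset.mem_filter.2 ⟨hpsV, ?_⟩
        rw [hmu', hval, hc']
        have hbpos : 0 < -(inner ℝ w (pstar - p₀) : ℝ) := by linarith [hBneg pstar hpsB]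
        have hteq : t = ((inner ℝ u pstar : ℝ) - m u) / (-(inner ℝ w (pstar - p₀) : ℝ)) := hpseq
        have : t * (-(inner ℝ w (pstar - p₀) : ℝ)) = (inner ℝ u pstar : ℝ) - m u := by
          rw [hteq]
          exact div_mul_cancel₀ _ (ne_of_gt hbpos)
        rw [inner_sub_right] at this
        linarith
      have hsep' : (inner ℝ u' z : ℝ) < m u' := by
        rw [hmu', hval, hc']
        rw [inner_sub_right] at hwz
        have : (inner ℝ w z : ℝ) = (inner ℝ w p₀ : ℝ) := by linarith
        rw [this]
        linarith
      have hcard1 : (T u).card < (T u').card :=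
        Finset.card_lt_card ⟨hTsub, fun hsub => hpsnotT (hsub hpsT')⟩
      have hcard2 : (T u').card ≤ V.card := Finset.card_filter_le _ _
      exact IH (V.card - (T u').card) (by omega) u' hsep' le_rfl
    obtain ⟨p₁, hp₁V, hp₁ne⟩ := hexists
    rcases lt_or_gt_of_ne hp₁ne with hneg | hpos
    · exact key w hwT hwz ⟨p₁, hp₁V, hneg⟩
    · refine key (-w) ?_ ?_ ⟨p₁, hp₁V, ?_⟩ <;> simp only [inner_neg_left]
      · intro q hq; rw [hwT q hq]; ring
      · rw [hwz]; ring
      · linarith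

end AuxRotation

section AuxFacets

variable {d : ℕ}

lemma face_subset {P F : Set (Pt d)} (h : IsFace P F) : F ⊆ P := by
  rcases h with rfl | rfl | ⟨u, c, _, rfl⟩
  · exact subset_rfl
  · exact empty_subset _
  · exact fun x hx => hx.1

lemma isFace_exposed {P F : Set (Pt d)} (h : IsFace P F) (hP : F ≠ P) (hne : F ≠ ∅) :
    ∃ u c, SupportsFacet P F u c := by
  rcases h with rfl | rfl | ⟨u, c, h1, h2⟩
  · exact absurd rfl hP
  · exact absurd rfl hne
  · exact ⟨u, c, h1, h2⟩

lemma dpoly_nonempty {P : Set (Pt d)} (hPdim : faceDim P = (d : ℤ)) : P ≠ ∅ := by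
  intro h
  rw [h, faceDim, if_pos rfl] at hPdim
  omega

lemma facet_ne_empty (hd : 1 ≤ d) {P F : Set (Pt d)} (h : IsFacet P F) : F ≠ ∅ := by
  intro he
  have := h.2
  rw [he, faceDim, if_pos rfl] at this
  omega

lemma facet_ne_self {P F : Set (Pt d)} (hPdim : faceDim P = (d : ℤ)) (h : IsFacet P F) :
    F ≠ P := by
  intro he
  have := h.2
  rw [he, hPdim] at this
  omega

lemma facet_supports (hd : 1 ≤ d) {P F : Set (Pt d)} (hPdim : faceDim P = (d : ℤ))
    (h : IsFacet P F) : ∃ u c, SupportsFacet P F u c :=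
  isFace_exposed h.1 (facet_ne_self hPdim h) (facet_ne_empty hd h)

lemma finrank_of_faceDim {F : Set (Pt d)} {n : ℕ} (h : faceDim F = (n : ℤ)) (hne : F ≠ ∅) :
    Module.finrank ℝ (vectorSpan ℝ F) = n := by
  rw [faceDim, if_neg hne] at h
  exact_mod_cast h

lemma vectorSpan_hull_eq {P : Set (Pt d)} (V : Finset (Pt d))
    (hP : P = convexHull ℝ (V : Set (Pt d))) :
    vectorSpan ℝ P = vectorSpan ℝ (V : Set (Pt d)) := by
  rw [hP, ← direction_affineSpan, affineSpan_convexHull, direction_affineSpan]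

lemma support_ne_zero (hd : 1 ≤ d) {P F : Set (Pt d)}
    (hPdim : faceDim P = (d : ℤ)) (hF : IsFacet P F)
    {u : Pt d} {c : ℝ} (hs : SupportsFacet P F u c) : u ≠ 0 := by
  rintro rfl
  by_cases hc : c = 0
  · apply facet_ne_self hPdim hF
    rw [hs.2]
    ext x
    simp [inner_zero_left, hc]
  · apply facet_ne_empty hd hF
    rw [hs.2]
    ext x
    simp only [mem_setOf_eq, inner_zero_left, mem_empty_iff_false, iff_false, not_and]
    intro _
    exact fun h => hc h.symm

lemma exists_strict_point (hd : 1 ≤ d) {P F : Set (Pt d)}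
    (hPdim : faceDim P = (d : ℤ)) (hF : IsFacet P F)
    {u : Pt d} {c : ℝ} (hs : SupportsFacet P F u c) :
    ∃ x ∈ P, c < (inner ℝ u x : ℝ) := by
  by_contra hno
  push_neg at hno
  apply facet_ne_self hPdim hF
  rw [hs.2]
  ext x
  simp only [mem_setOf_eq]
  exact ⟨fun h => h.1, fun hx => ⟨hx, le_antisymm (hno x hx) (hs.1 x hx)⟩⟩

lemma supports_unique (hd : 1 ≤ d) {P F : Set (Pt d)}
    (hPdim : faceDim P = (d : ℤ)) (hF : IsFacet P F)
    {u c u' c'} (h1 : SupportsFacet P F u c) (h2 : SupportsFacet P F u' c') :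
    ∃ lam : ℝ, 0 < lam ∧ u' = lam • u ∧ c' = lam * c := by
  have hFne : F ≠ ∅ := facet_ne_empty hd hF
  obtain ⟨p₀, hp₀⟩ := Set.nonempty_iff_ne_empty.2 hFne
  have hr : Module.finrank ℝ (vectorSpan ℝ F) = d - 1 := by
    have := hF.2
    rw [faceDim, if_neg hFne] at this
    omega
  -- both normals are orthogonal to the span of F
  have horth : ∀ (v : Pt d) (b : ℝ), SupportsFacet P F v b → v ∈ (vectorSpan ℝ F)ᗮ := by
    intro v b hs
    rw [vectorSpan_eq_span_vsub_set_right ℝ hp₀]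
    apply mem_orthogonal_span
    rintro x ⟨q, hq, rfl⟩
    have hqv : (inner ℝ v q : ℝ) = b := by
      have := hs.2 ▸ hq
      exact this.2
    have hp₀v : (inner ℝ v p₀ : ℝ) = b := by
      have := hs.2 ▸ hp₀
      exact this.2
    simp only [vsub_eq_sub]
    rw [inner_sub_right, hqv, hp₀v, sub_self]
  have hu0 : u ≠ 0 := support_ne_zero hd hPdim hF h1
  have hspan : Submodule.span ℝ ({u} : Set (Pt d)) = (vectorSpan ℝ F)ᗮ := by
    apply Submodule.eq_of_le_of_finrank_le
    · rw [Submodule.span_le, Set.singleton_subset_iff]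
      exact horth u c h1
    · have h3 : Module.finrank ℝ (vectorSpan ℝ F) + Module.finrank ℝ (vectorSpan ℝ F)ᗮ
          = d := by
        rw [Submodule.finrank_add_finrank_orthogonal, finrank_euclideanSpace_fin]
      rw [finrank_span_singleton hu0]
      omega
  have hu'mem : u' ∈ Submodule.span ℝ ({u} : Set (Pt d)) := by
    rw [hspan]
    exact horth u' c' h2
  obtain ⟨lam, hlam⟩ := Submodule.mem_span_singleton.1 hu'mem
  have hc' : c' = lam * c := by
    have hp₀u : (inner ℝ u p₀ : ℝ) = c := (h1.2 ▸ hp₀).2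
    have hp₀u' : (inner ℝ u' p₀ : ℝ) = c' := (h2.2 ▸ hp₀).2
    rw [← hlam, real_inner_smul_left, hp₀u] at hp₀u'
    exact hp₀u'.symm
  have hlam0 : lam ≠ 0 := by
    rintro rfl
    rw [zero_smul] at hlam
    exact support_ne_zero hd hPdim hF h2 hlam.symm
  obtain ⟨x₀, hx₀P, hx₀⟩ := exists_strict_point hd hPdim hF h1
  have hpos : 0 < lam := by
    rcases lt_or_gt_of_ne hlam0 with h | h
    · exfalso
      have := h2.1 x₀ hx₀P
      rw [← hlam, real_inner_smul_left] at this
      nlinarith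
    · exact h
  exact ⟨lam, hpos, hlam.symm, hc'⟩

lemma facets_finite (hd : 1 ≤ d) {P : Set (Pt d)} (V : Finset (Pt d))
    (hP : P = convexHull ℝ (V : Set (Pt d))) (hPdim : faceDim P = (d : ℤ)) :
    {F : Set (Pt d) | IsFacet P F}.Finite := by
  classical
  have key : ∀ F ∈ {F : Set (Pt d) | IsFacet P F},
      F = convexHull ℝ ((V.filter (· ∈ F) : Finset (Pt d)) : Set (Pt d)) := by
    intro F hF
    obtain ⟨u, c, hs⟩ := facet_supports hd hPdim hF
    have hVc : ∀ p ∈ V, c ≤ (inner ℝ u p : ℝ) := fun p hp =>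
      hs.1 p (hP ▸ subset_convexHull ℝ _ hp)
    have h3 : V.filter (fun p => (inner ℝ u p : ℝ) = c) = V.filter (· ∈ F) := by
      apply Finset.filter_congr
      intro p hp
      have hpP : p ∈ P := hP ▸ subset_convexHull ℝ _ hp
      simp only [hs.2, mem_setOf_eq]
      exact ⟨fun h => ⟨hpP, h⟩, fun h => h.2⟩
    conv_lhs => rw [hs.2, hP]
    rw [exposed_eq_hull V u c hVc, h3]
  apply Set.Finite.of_finite_image (f := fun F : Set (Pt d) => V.filter (· ∈ F))
  · apply Set.Finite.subset (V.powerset : Finset (Finset (Pt d))).finite_toSet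
    rintro A ⟨F, _, rfl⟩
    simp only [Finset.coe_powerset, Set.mem_preimage, Set.mem_powerset_iff, Finset.coe_subset,
      Finset.mem_coe]
    exact Finset.filter_subset _ _
  · intro F₁ h₁ F₂ h₂ heq
    rw [key F₁ h₁, key F₂ h₂]
    simp only at heq
    rw [heq]

lemma mem_of_beneath_all (hd : 1 ≤ d) {P : Set (Pt d)} (V : Finset (Pt d))
    (hP : P = convexHull ℝ (V : Set (Pt d))) (hPdim : faceDim P = (d : ℤ))
    {z : Pt d} (h : ∀ F u c, IsFacet P F → SupportsFacet P F u c → c ≤ (inner ℝ u z : ℝ)) :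
    z ∈ P := by
  by_contra hz
  have hPne : P ≠ ∅ := dpoly_nonempty hPdim
  have hVne : V.Nonempty := by
    rcases V.eq_empty_or_nonempty with rfl | hne
    · exfalso; apply hPne; rw [hP]; simp
    · exact hne
  have hdim : Module.finrank ℝ (vectorSpan ℝ (V : Set (Pt d))) = d := by
    rw [← vectorSpan_hull_eq V hP]
    exact finrank_of_faceDim hPdim hPne
  obtain ⟨F, u, c, hF, hs, hlt⟩ := exists_facet_beyond V hVne hP hdim hz
  linarith [h F u c hF hs]

end AuxFacets

set_option maxHeartbeats 2000000

theorem face_survives_pseudoStack_iff {d : ℕ}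
    (P S : Set (Pt d)) (𝓕 𝓝 : Set (Set (Pt d))) (v : Pt d)
    (G : Set (Pt d)) (k : ℤ)
    (h : PseudoStackSetup P S 𝓕 𝓝) (hv : v ∈ PseudoRegion P S 𝓕 𝓝)
    (hk0 : 0 ≤ k) (hkd : k ≤ (d : ℤ) - 2)
    (hG : IsFace P G) (hGd : faceDim G = k) :
    IsFace (pseudoStack P v) G ↔
      ∃ F', IsFacet P F' ∧ F' ≠ S ∧ F' ∉ 𝓕 ∧ F' ∉ 𝓝 ∧ G ⊆ F' := by
  classical
  obtain ⟨⟨⟨V, hPV⟩, hPdim⟩, hd3, hS, hbd, hadj, hdisj, hns⟩ := h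
  replace hv : ∀ H u c, IsFacet P H → SupportsFacet P H u c →
      ((H = S ∨ H ∈ 𝓝) → (inner ℝ u v : ℝ) < c) ∧
      (H ∈ 𝓕 → (inner ℝ u v : ℝ) = c) ∧
      ((H ≠ S ∧ H ∉ 𝓝 ∧ H ∉ 𝓕) → c < (inner ℝ u v : ℝ)) := hv
  have hd1 : 1 ≤ d := by omega
  have hPne : P ≠ ∅ := dpoly_nonempty hPdim
  have hPconv : Convex ℝ P := hPV ▸ convex_convexHull ℝ _
  have hPQ : P ⊆ pseudoStack P v := by
    rw [pseudoStack]
    exact Set.Subset.trans Set.subset_union_left (subset_convexHull ℝ _)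
  have hvQ : v ∈ pseudoStack P v := subset_convexHull ℝ _ (Or.inr rfl)
  obtain ⟨uS, cS, hsS⟩ := facet_supports hd1 hPdim hS.1
  have hvS : (inner ℝ uS v : ℝ) < cS := (hv S uS cS hS.1 hsS).1 (Or.inl rfl)
  have hvP : v ∉ P := fun hvP => absurd (hsS.1 v hvP) (by linarith)
  have hGP : G ⊆ P := face_subset hG
  have hGne : G ≠ ∅ := by
    intro he
    rw [he, faceDim, if_pos rfl] at hGd
    omega
  have hGneP : G ≠ P := by
    intro he
    rw [he, hPdim] at hGd
    omega
  constructor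
  · -- hard direction
    intro hGQ
    by_contra hno
    push_neg at hno
    rcases hGQ with hQ | hQ | ⟨uq, cq, hq1, hq2⟩
    · exact hvP (hGP (hQ ▸ hvQ))
    · exact hGne hQ
    -- G is exposed in P by (uq, cq) and v is strictly beyond
    have hGexp : G = {x ∈ P | (inner ℝ uq x : ℝ) = cq} := by
      ext x
      constructor
      · intro hx
        have := hq2 ▸ hx
        exact ⟨hGP hx, this.2⟩
      · rintro ⟨hxP, hxc⟩
        rw [hq2]
        exact ⟨hPQ hxP, hxc⟩
    have hvq : cq < (inner ℝ uq v : ℝ) := by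
      rcases lt_or_eq_of_le (hq1 v hvQ) with h' | h'
      · exact h'
      · exfalso
        apply hvP
        apply hGP
        rw [hq2]
        exact ⟨hvQ, h'.symm⟩
    -- the vertices supporting G and its "centroid" y
    set W := V.filter (· ∈ G) with hW
    have hVq : ∀ p ∈ V, cq ≤ (inner ℝ uq p : ℝ) := fun p hp =>
      hq1 p (hPQ (hPV ▸ subset_convexHull ℝ _ hp))
    have hWfil : V.filter (fun p => (inner ℝ uq p : ℝ) = cq) = W := by
      rw [hW]
      apply Finset.filter_congr
      intro p hp
      have hpP : p ∈ P := hPV ▸ subset_convexHull ℝ _ hp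
      simp only [hGexp, mem_setOf_eq]
      exact ⟨fun h' => ⟨hpP, h'⟩, fun h' => h'.2⟩
    have hGhull : G = convexHull ℝ (W : Set (Pt d)) := by
      conv_lhs => rw [hGexp, hPV]
      rw [exposed_eq_hull V uq cq hVq, hWfil]
    have hWne : W.Nonempty := by
      rcases W.eq_empty_or_nonempty with he | hne
      · exfalso
        apply hGne
        rw [hGhull, he]
        simp
      · exact hne
    have hWG : ∀ p ∈ W, p ∈ G := fun p hp => (Finset.mem_filter.1 hp).2
    have hWcard : (0 : ℝ) < (W.card : ℝ) := by
      have := Finset.card_pos.2 hWne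
      exact_mod_cast this
    set y := W.centerMass (fun _ => ((W.card : ℝ))⁻¹) id with hy
    have hwsum : ∑ p ∈ W, ((W.card : ℝ))⁻¹ = 1 := by
      rw [Finset.sum_const, nsmul_eq_mul]
      exact mul_inv_cancel₀ hWcard.ne'
    have hyG : y ∈ G := by
      rw [hGhull]
      exact W.centerMass_mem_convexHull (fun i _ => inv_nonneg.2 hWcard.le)
        (by rw [hwsum]; norm_num) (fun i hi => hi)
    have hinnery : ∀ x : Pt d, (inner ℝ x y : ℝ) = ∑ p ∈ W, ((W.card : ℝ))⁻¹ * (inner ℝ x p : ℝ) :=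
      fun x => inner_centerMass x W _ hwsum
    have hyq : (inner ℝ uq y : ℝ) = cq := (hGexp ▸ hyG).2
    -- canonical supports for all facets
    choose! uu cc hsupp using fun (F : Set (Pt d)) (hF : IsFacet P F) =>
      facet_supports hd1 hPdim hF
    -- the finite set of facets
    have hfin : {F : Set (Pt d) | IsFacet P F}.Finite := facets_finite hd1 V hPV hPdim
    set FS := hfin.toFinset with hFS
    have hFSne : FS.Nonempty := ⟨S, by rw [hFS, Set.Finite.mem_toFinset]; exact hS.1⟩
    have hFSmem : ∀ F, IsFacet P F ↔ F ∈ FS := by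
      intro F
      rw [hFS, Set.Finite.mem_toFinset]
      exact Iff.rfl
    -- strict slack at y for facets not containing G
    have hslack : ∀ F, IsFacet P F → ¬ G ⊆ F → cc F < (inner ℝ (uu F) y : ℝ) := by
      intro F hF hGF
      have hs := hsupp F hF
      have hFconv : Convex ℝ F := by
        rw [hs.2]
        exact Convex.inter hPconv (convex_hyper (uu F) (cc F))
      obtain ⟨p₂, hp₂W, hp₂F⟩ : ∃ p ∈ W, p ∉ F := by
        by_contra hall
        push_neg at hall
        apply hGF
        rw [hGhull]
        exact convexHull_min (fun p hp => hall p hp) hFconv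
      have hge : ∀ p ∈ W, cc F ≤ (inner ℝ (uu F) p : ℝ) := fun p hp =>
        hs.1 p (hGP (hWG p hp))
      have hgt : cc F < (inner ℝ (uu F) p₂ : ℝ) := by
        rcases lt_or_eq_of_le (hge p₂ hp₂W) with h' | h'
        · exact h'
        · exfalso
          apply hp₂F
          rw [hs.2]
          exact ⟨hGP (hWG p₂ hp₂W), h'.symm⟩
      rw [hinnery]
      have hconst : ∑ p ∈ W, ((W.card : ℝ))⁻¹ * cc F = cc F := by
        rw [← Finset.sum_mul, hwsum, one_mul]
      rw [← hconst]
      apply Finset.sum_lt_sum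
      · intro i hi
        exact mul_le_mul_of_nonneg_left (hge i hi) (inv_nonneg.2 hWcard.le)
      · exact ⟨p₂, hp₂W, by
          apply mul_lt_mul_of_pos_left hgt
          exact inv_pos.2 hWcard⟩
    -- choose the uniform step size t
    set τ : Set (Pt d) → ℝ := fun F =>
      if G ⊆ F then 1
      else ((inner ℝ (uu F) y : ℝ) - cc F) / (max ((inner ℝ (uu F) v : ℝ) - (inner ℝ (uu F) y : ℝ)) 1)
      with hτ
    set t := FS.inf' hFSne τ with ht
    have htpos : 0 < t := by
      rw [ht, Finset.lt_inf'_iff]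
      intro F hF
      have hFfac : IsFacet P F := (hFSmem F).2 hF
      simp only [hτ]
      by_cases hGF : G ⊆ F
      · rw [if_pos hGF]; norm_num
      · rw [if_neg hGF]
        apply div_pos
        · linarith [hslack F hFfac hGF]
        · exact lt_of_lt_of_le one_pos (le_max_right _ _)
    set z := y + t • (y - v) with hz
    have hinnerz : ∀ x : Pt d, (inner ℝ x z : ℝ)
        = (inner ℝ x y : ℝ) + t * ((inner ℝ x y : ℝ) - (inner ℝ x v : ℝ)) := by
      intro x
      rw [hz, inner_add_right, real_inner_smul_right, inner_sub_right]
    -- z satisfies every facet inequality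
    have hzP : z ∈ P := by
      apply mem_of_beneath_all hd1 V hPV hPdim
      intro F u c hF hs
      obtain ⟨lam, hlam_pos, hlam_u, hlam_c⟩ :=
        supports_unique hd1 hPdim hF (hsupp F hF) hs
      have hcan : cc F ≤ (inner ℝ (uu F) z : ℝ) := by
        by_cases hGF : G ⊆ F
        · -- facets containing G : v is beyond-or-on
          have hFin : F = S ∨ F ∈ 𝓕 ∨ F ∈ 𝓝 := by
            by_contra hFno
            push_neg at hFno
            exact hno F hF hFno.1 hFno.2.1 hFno.2.2 hGF
          have hvleF : (inner ℝ (uu F) v : ℝ) ≤ cc F := by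
            have h3 := hv F (uu F) (cc F) hF (hsupp F hF)
            rcases hFin with h' | h' | h'
            · exact le_of_lt (h3.1 (Or.inl h'))
            · exact le_of_eq (h3.2.1 h')
            · exact le_of_lt (h3.1 (Or.inr h'))
          have hyF : (inner ℝ (uu F) y : ℝ) = cc F := ((hsupp F hF).2 ▸ hGF hyG).2
          rw [hinnerz, hyF]
          nlinarith
        · -- facets with slack : t is small enough
          have hFfs : F ∈ FS := (hFSmem F).1 hF
          have htle : t ≤ τ F := ht ▸ Finset.inf'_le τ hFfs
          simp only [hτ] at htle
          rw [if_neg hGF] at htle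
          set s := (inner ℝ (uu F) y : ℝ) - cc F with hsdef
          set Δ := (inner ℝ (uu F) v : ℝ) - (inner ℝ (uu F) y : ℝ) with hΔ
          set M := max Δ 1 with hM
          have hMpos : (0 : ℝ) < M := lt_of_lt_of_le one_pos (le_max_right _ _)
          have hspos : 0 < s := by
            rw [hsdef]
            linarith [hslack F hF hGF]
          have h1 : t * M ≤ s := by
            rw [le_div_iff₀ hMpos] at htle
            linarith
          have h2 : t * Δ ≤ t * M :=
            mul_le_mul_of_nonneg_left (le_max_left _ _) htpos.le
          rw [hinnerz]
          have : (inner ℝ (uu F) y : ℝ) - (inner ℝ (uu F) v : ℝ) = -Δ := by rw [hΔ]; ring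
          rw [this]
          have : cc F = (inner ℝ (uu F) y : ℝ) - s := by rw [hsdef]; ring
          rw [this]
          nlinarith
      calc c = lam * cc F := hlam_c
        _ ≤ lam * (inner ℝ (uu F) z : ℝ) := mul_le_mul_of_nonneg_left hcan hlam_pos.le
        _ = (inner ℝ u z : ℝ) := by rw [hlam_u, real_inner_smul_left]
    -- but z violates the exposing inequality of G in Q : contradiction
    have hzQ : cq ≤ (inner ℝ uq z : ℝ) := hq1 z (hPQ hzP)
    rw [hinnerz, hyq] at hzQ
    nlinarith
  · -- easy direction
    rintro ⟨F', hF', hne, hnF, hnN, hGF⟩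
    obtain ⟨w, b, hsG⟩ := isFace_exposed hG hGneP hGne
    obtain ⟨uf, cf, hsF⟩ := facet_supports hd1 hPdim hF'
    have hvF : cf < (inner ℝ uf v : ℝ) := (hv F' uf cf hF' hsF).2.2 ⟨hne, hnN, hnF⟩
    set A := (inner ℝ uf v : ℝ) - cf with hA
    have hApos : 0 < A := by rw [hA]; linarith
    set Bv := b - (inner ℝ w v : ℝ) with hBv
    set ε := A / (2 * (|Bv| + 1)) with hε
    have hεpos : 0 < ε := by
      rw [hε]
      apply div_pos hApos
      positivity
    have hεB : ε * Bv < A := by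
      have h1 : ε * Bv ≤ ε * |Bv| :=
        mul_le_mul_of_nonneg_left (le_abs_self _) hεpos.le
      have h2 : ε * |Bv| < A := by
        rw [hε]
        rw [div_mul_eq_mul_div, div_lt_iff₀ (by positivity)]
        nlinarith [abs_nonneg Bv]
      linarith
    set u' := uf + ε • w with hu'
    set c' := cf + ε * b with hc'
    have hval : ∀ x : Pt d, (inner ℝ u' x : ℝ) = (inner ℝ uf x : ℝ) + ε * (inner ℝ w x : ℝ) := by
      intro x
      rw [hu', inner_add_left, real_inner_smul_left]
    have hPineq : ∀ x ∈ P, c' ≤ (inner ℝ u' x : ℝ) := by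
      intro x hx
      rw [hval, hc']
      have h1 := hsF.1 x hx
      have h2 := hsG.1 x hx
      nlinarith
    have hvineq : c' < (inner ℝ u' v : ℝ) := by
      rw [hval, hc']
      have : (inner ℝ w v : ℝ) = b - Bv := by rw [hBv]; ring
      rw [this]
      have : (inner ℝ uf v : ℝ) = cf + A := by rw [hA]; ring
      rw [this]
      nlinarith
    refine Or.inr (Or.inr ⟨u', c', ?_, ?_⟩)
    · -- Q lies in the halfspace
      intro x hx
      rw [pseudoStack] at hx
      refine convexHull_min ?_ (convex_halfGe u' c') hx
      rintro p (hp | hp)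
      · exact hPineq p hp
      · rw [Set.mem_singleton_iff] at hp
        rw [hp]
        exact hvineq.le
    · -- the exposed set is exactly G
      ext x
      constructor
      · intro hx
        have hxF : x ∈ F' := hGF hx
        have hxuf : (inner ℝ uf x : ℝ) = cf := (hsF.2 ▸ hxF).2
        have hxw : (inner ℝ w x : ℝ) = b := (hsG.2 ▸ hx).2
        refine ⟨hPQ (hGP hx), ?_⟩
        rw [hval, hxuf, hxw, hc']
      · rintro ⟨hxQ, hxc⟩
        rw [pseudoStack, Set.union_singleton,
          convexHull_insert (Set.nonempty_iff_ne_empty.2 hPne), mem_convexJoin] at hxQ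
        obtain ⟨a, ha, q, hq, hseg⟩ := hxQ
        rw [Set.mem_singleton_iff] at ha
        rw [ha] at hseg
        rw [hPconv.convexHull_eq] at hq
        obtain ⟨a₁, a₂, ha₁, ha₂, ha12, hcomb⟩ := hseg
        have hfx : (inner ℝ u' x : ℝ) = a₁ * (inner ℝ u' v : ℝ) + a₂ * (inner ℝ u' q : ℝ) := by
          rw [← hcomb, inner_add_right, real_inner_smul_right, real_inner_smul_right]
        have hq' : c' ≤ (inner ℝ u' q : ℝ) := hPineq q hq
        have ha₁0 : a₁ = 0 := by
          by_contra hne0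
          have ha₁pos : 0 < a₁ := lt_of_le_of_ne ha₁ (Ne.symm hne0)
          have h1 : a₁ * c' < a₁ * (inner ℝ u' v : ℝ) := mul_lt_mul_of_pos_left hvineq ha₁pos
          have h2 : a₂ * c' ≤ a₂ * (inner ℝ u' q : ℝ) := mul_le_mul_of_nonneg_left hq' ha₂
          have h3 : a₁ * c' + a₂ * c' = c' := by
            have : (a₁ + a₂) * c' = c' := by rw [ha12, one_mul]
            linarith [this]
          rw [hxc] at hfx
          linarith
        have ha₂1 : a₂ = 1 := by linarith
        have hxq : x = q := by
          rw [← hcomb, ha₁0, ha₂1]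
          simp
        subst hxq
        -- x ∈ P and both inequalities are tight
        have h1 := hsF.1 x hq
        have h2 := hsG.1 x hq
        have hxval : (inner ℝ uf x : ℝ) + ε * (inner ℝ w x : ℝ) = cf + ε * b := by
          rw [← hval, ← hc', hxc]
        have hwb : (inner ℝ w x : ℝ) = b := by
          by_contra hne'
          have : b < (inner ℝ w x : ℝ) := lt_of_le_of_ne h2 (Ne.symm hne')
          nlinarith
        rw [hsG.2]
        exact ⟨hq, hwb⟩
end
end

section
/- Under the hypotheses of the pseudo-stacking construction, if additionally every vertex of P is contained in at least one facet of P not in F ∪ N ∪ {S}, then the pseudo-stacked polytope has exactly one more vertex than P: f_0(conv(P ∪ {v})) = f_0(P) + 1. -/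
open Set
open scoped Classical

noncomputable section

section Aux

variable {d : ℕ}

lemma aux_inner_linear (u : Pt d) : IsLinearMap ℝ (fun x : Pt d => (inner ℝ u x : ℝ)) :=
  ⟨fun a b => inner_add_right u a b, fun r a => real_inner_smul_right u a r⟩

lemma aux_convexHull_inner_ge {A : Set (Pt d)} {u : Pt d} {c : ℝ}
    (h : ∀ a ∈ A, c ≤ (inner ℝ u a : ℝ)) {x : Pt d}
    (hx : x ∈ convexHull ℝ A) : c ≤ (inner ℝ u x : ℝ) :=
  convexHull_min h (convex_halfSpace_ge (aux_inner_linear u) c) hx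

lemma aux_weights {A : Finset (Pt d)} {u : Pt d} {c : ℝ} {x : Pt d}
    (h : ∀ a ∈ A, c ≤ (inner ℝ u a : ℝ))
    (hx : x ∈ convexHull ℝ (A : Set (Pt d))) (hxc : (inner ℝ u x : ℝ) = c) :
    (∃ a ∈ A, (inner ℝ u a : ℝ) = c) ∧
      ∀ w : Pt d, (∀ a ∈ A, (inner ℝ u a : ℝ) = c → a = w) → x = w := by
  rw [Finset.convexHull_eq] at hx
  obtain ⟨lam, h0, h1, hcm⟩ := hx
  rw [A.centerMass_eq_of_sum_1 _ h1] at hcm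
  have hinner : (inner ℝ u x : ℝ) = ∑ a ∈ A, lam a * (inner ℝ u a : ℝ) := by
    rw [← hcm, inner_sum]
    exact Finset.sum_congr rfl fun a _ => real_inner_smul_right u a (lam a)
  have hsum : ∑ a ∈ A, lam a * ((inner ℝ u a : ℝ) - c) = 0 := by
    have h2 : ∑ a ∈ A, lam a * c = c := by rw [← Finset.sum_mul, h1, one_mul]
    have h3 : ∑ a ∈ A, lam a * ((inner ℝ u a : ℝ) - c)
        = (∑ a ∈ A, lam a * (inner ℝ u a : ℝ)) - ∑ a ∈ A, lam a * c := by
      rw [← Finset.sum_sub_distrib]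
      exact Finset.sum_congr rfl fun a _ => by ring
    rw [h3, h2, ← hinner, hxc, sub_self]
  have hzero : ∀ a ∈ A, lam a * ((inner ℝ u a : ℝ) - c) = 0 :=
    (Finset.sum_eq_zero_iff_of_nonneg fun a ha =>
      mul_nonneg (h0 a ha) (by linarith [h a ha])).1 hsum
  constructor
  · obtain ⟨a, ha, hla⟩ := Finset.exists_ne_zero_of_sum_ne_zero (h1 ▸ one_ne_zero)
    refine ⟨a, ha, ?_⟩
    have := hzero a ha
    rcases mul_eq_zero.1 this with h' | h'
    · exact absurd h' hla
    · linarith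
  · intro w hw
    have hx' : x = ∑ a ∈ A, lam a • w := by
      rw [← hcm]
      refine Finset.sum_congr rfl fun a ha => ?_
      by_cases hla : lam a = 0
      · simp [hla]
      · have : (inner ℝ u a : ℝ) = c := by
          rcases mul_eq_zero.1 (hzero a ha) with h' | h'
          · exact absurd h' hla
          · linarith
        simp [hw a ha this]
    rw [hx', ← Finset.sum_smul, h1, one_smul]

lemma aux_isVertex_of_exposing {A : Finset (Pt d)} {u : Pt d} {c : ℝ} {w : Pt d}
    (h : ∀ a ∈ A, c ≤ (inner ℝ u a : ℝ))
    (hw : ∀ a ∈ A, (inner ℝ u a : ℝ) = c → a = w)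
    (hwQ : w ∈ convexHull ℝ (A : Set (Pt d))) (hwc : (inner ℝ u w : ℝ) = c) :
    IsVertex (convexHull ℝ (A : Set (Pt d))) w := by
  refine Or.inr (Or.inr ⟨u, c, fun x hx => aux_convexHull_inner_ge h hx, ?_⟩)
  ext x
  constructor
  · rintro rfl; exact ⟨hwQ, hwc⟩
  · rintro ⟨hxQ, hxc⟩
    exact (aux_weights h hxQ hxc).2 w hw

lemma aux_vertex_mem {A : Finset (Pt d)} {w : Pt d}
    (hv : IsVertex (convexHull ℝ (A : Set (Pt d))) w) : w ∈ A := by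
  rcases hv with hQ | he | ⟨u, c, hle, hext⟩
  · -- {w} = convexHull A
    have hA : (A : Set (Pt d)) ⊆ {w} := hQ ▸ subset_convexHull ℝ _
    have hw : w ∈ convexHull ℝ (A : Set (Pt d)) := hQ ▸ rfl
    rw [Finset.convexHull_eq] at hw
    obtain ⟨lam, h0, h1, _⟩ := hw
    obtain ⟨a, ha, _⟩ := Finset.exists_ne_zero_of_sum_ne_zero (h1 ▸ one_ne_zero)
    have : a = w := hA ha
    exact this ▸ ha
  · exact absurd he (Set.singleton_ne_empty w)
  · have hwQ : w ∈ convexHull ℝ (A : Set (Pt d)) ∧ (inner ℝ u w : ℝ) = c := by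
      have : w ∈ {x ∈ convexHull ℝ (A : Set (Pt d)) | (inner ℝ u x : ℝ) = c} :=
        hext ▸ rfl
      exact this
    have hA : ∀ a ∈ A, c ≤ (inner ℝ u a : ℝ) := fun a ha =>
      hle a (subset_convexHull ℝ _ ha)
    obtain ⟨a, ha, hac⟩ := (aux_weights hA hwQ.1 hwQ.2).1
    have : a ∈ ({w} : Set (Pt d)) := hext ▸ (⟨subset_convexHull ℝ _ ha, hac⟩ :
      a ∈ {x ∈ convexHull ℝ (A : Set (Pt d)) | (inner ℝ u x : ℝ) = c})
    rw [Set.mem_singleton_iff] at this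
    exact this ▸ ha

lemma aux_isVertex_of_subset {P Q : Set (Pt d)} {w : Pt d} (hPQ : P ⊆ Q)
    (hwP : w ∈ P) (hv : IsVertex Q w) : IsVertex P w := by
  rcases hv with hQ | he | ⟨u, c, hle, hext⟩
  · left
    apply Set.Subset.antisymm (Set.singleton_subset_iff.2 hwP)
    intro x hx
    exact hQ ▸ (hPQ hx)
  · exact absurd he (Set.singleton_ne_empty w)
  · refine Or.inr (Or.inr ⟨u, c, fun x hx => hle x (hPQ hx), ?_⟩)
    have hwc : (inner ℝ u w : ℝ) = c := by
      have : w ∈ {x ∈ Q | (inner ℝ u x : ℝ) = c} := hext ▸ rfl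
      exact this.2
    ext x
    constructor
    · rintro rfl; exact ⟨hwP, hwc⟩
    · rintro ⟨hxP, hxc⟩
      have : x ∈ ({w} : Set (Pt d)) := hext ▸ (⟨hPQ hxP, hxc⟩ :
        x ∈ {y ∈ Q | (inner ℝ u y : ℝ) = c})
      exact this

lemma aux_isVertex_mem {P : Set (Pt d)} {w : Pt d} (hv : IsVertex P w) : w ∈ P := by
  rcases hv with hQ | he | ⟨u, c, _, hext⟩
  · exact hQ ▸ rfl
  · exact absurd he (Set.singleton_ne_empty w)
  · have : w ∈ {x ∈ P | (inner ℝ u x : ℝ) = c} := hext ▸ rfl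
    exact this.1

lemma aux_faceDim_singleton (w : Pt d) : faceDim ({w} : Set (Pt d)) = 0 := by
  rw [faceDim, if_neg (Set.singleton_ne_empty w), vectorSpan_singleton]
  simp

lemma aux_fk_zero (R : Set (Pt d)) : fk 0 R = Set.ncard {w | IsVertex R w} := by
  rw [fk, ← Nat.card_coe_set_eq]
  refine (Nat.card_eq_of_bijective
    (fun w => ⟨{(w : Pt d)}, w.2, aux_faceDim_singleton _⟩) ⟨?_, ?_⟩).symm
  · intro a b hab
    have := congrArg Subtype.val hab
    simp only [Set.singleton_eq_singleton_iff] at this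
    exact Subtype.ext this
  · rintro ⟨F, hF, hdim⟩
    have hne : F ≠ ∅ := by
      intro h0
      rw [faceDim, if_pos h0] at hdim
      norm_num at hdim
    rw [faceDim, if_neg hne] at hdim
    have hrank : Module.finrank ℝ (vectorSpan ℝ F) = 0 := by exact_mod_cast hdim
    have hbot : vectorSpan ℝ F = ⊥ := Submodule.finrank_eq_zero.1 hrank
    obtain ⟨x, hx⟩ := Set.nonempty_iff_ne_empty.2 hne
    have hFx : F = {x} := by
      apply Set.Subset.antisymm
      · intro y hy
        have : y -ᵥ x ∈ vectorSpan ℝ F := vsub_mem_vectorSpan ℝ hy hx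
        rw [hbot, Submodule.mem_bot] at this
        have : y = x := by
          have := vsub_eq_zero_iff_eq.1 this
          exact this
        exact this ▸ rfl
      · exact Set.singleton_subset_iff.2 hx
    refine ⟨⟨x, ?_⟩, Subtype.ext hFx.symm⟩
    show IsFace R {x}
    rw [← hFx]
    exact hF

lemma aux_facet_exposed {P F : Set (Pt d)} (hd : 3 ≤ d) (hP : faceDim P = (d : ℤ))
    (hF : IsFacet P F) : ∃ u c, SupportsFacet P F u c := by
  rcases hF.1 with hFP | hFe | ⟨u, c, h1, h2⟩
  · exfalso
    have := hF.2
    rw [hFP, hP] at this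
    omega
  · exfalso
    have := hF.2
    rw [hFe, faceDim, if_pos rfl] at this
    omega
  · exact ⟨u, c, h1, h2⟩

lemma aux_vertex_exposed {P : Set (Pt d)} {w : Pt d} (hd : 3 ≤ d)
    (hP : faceDim P = (d : ℤ)) (hw : IsVertex P w) :
    ∃ u c, (∀ x ∈ P, c ≤ (inner ℝ u x : ℝ)) ∧ ({w} : Set (Pt d)) = {x ∈ P | (inner ℝ u x : ℝ) = c} := by
  rcases hw with hwP | he | ⟨u, c, h1, h2⟩
  · exfalso
    have : faceDim P = 0 := hwP ▸ aux_faceDim_singleton w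
    omega
  · exact absurd he (Set.singleton_ne_empty w)
  · exact ⟨u, c, h1, h2⟩

end Aux

theorem pseudoStack_vertices_plus_one {d : ℕ}
    (P S : Set (Pt d)) (𝓕 𝓝 : Set (Set (Pt d))) (v : Pt d)
    (h : PseudoStackSetup P S 𝓕 𝓝) (hv : v ∈ PseudoRegion P S 𝓕 𝓝)
    (hvert : ∀ w, IsVertex P w →
      ∃ F', IsFacet P F' ∧ F' ≠ S ∧ F' ∉ 𝓕 ∧ F' ∉ 𝓝 ∧ w ∈ F') :
    fk 0 (pseudoStack P v) = fk 0 P + 1 := by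
  obtain ⟨⟨⟨V, hPV⟩, hPdim⟩, hd3, hS, hbd, hadj, hdisj, hns⟩ := h
  obtain ⟨uS, cS, hsupS⟩ := aux_facet_exposed hd3 hPdim hS.1
  have hvS : (inner ℝ uS v : ℝ) < cS := (hv S uS cS hS.1 hsupS).1 (Or.inl rfl)
  have hvP : v ∉ P := fun hvp => absurd (hsupS.1 v hvp) (not_le.2 hvS)
  set A : Finset (Pt d) := insert v V with hA
  have hQA : pseudoStack P v = convexHull ℝ (A : Set (Pt d)) := by
    rw [pseudoStack, hPV, convexHull_convexHull_union_left]
    congr 1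
    simp [hA, Finset.coe_insert, Set.union_singleton]
  have hVP : (V : Set (Pt d)) ⊆ P := hPV ▸ subset_convexHull ℝ _
  have hPQ : P ⊆ convexHull ℝ (A : Set (Pt d)) := by
    rw [hPV]
    exact convexHull_mono fun x hx =>
      Finset.mem_coe.2 (Finset.mem_insert_of_mem (Finset.mem_coe.1 hx))
  have hvvert : IsVertex (convexHull ℝ (A : Set (Pt d))) v := by
    apply aux_isVertex_of_exposing (u := uS) (c := (inner ℝ uS v : ℝ))
    · intro a ha
      rcases Finset.mem_insert.1 ha with rfl | haV
      · exact le_refl _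
      · linarith [hsupS.1 a (hVP haV)]
    · intro a ha hac
      rcases Finset.mem_insert.1 ha with rfl | haV
      · rfl
      · exfalso; linarith [hsupS.1 a (hVP haV)]
    · exact subset_convexHull ℝ _ (Finset.mem_coe.2 (Finset.mem_insert_self v V))
    · rfl
  have hPsubQ : ∀ w, IsVertex P w → IsVertex (convexHull ℝ (A : Set (Pt d))) w := by
    intro w hw
    obtain ⟨uw, cw, hwsup, hwext⟩ := aux_vertex_exposed hd3 hPdim hw
    have hwP : w ∈ P ∧ (inner ℝ uw w : ℝ) = cw := by
      have h' : w ∈ ({w} : Set (Pt d)) := rfl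
      rw [hwext] at h'
      exact h'
    obtain ⟨F', hF'fac, hneS, hnF, hnN, hwF'⟩ := hvert w hw
    obtain ⟨u', c', hsup'⟩ := aux_facet_exposed hd3 hPdim hF'fac
    have hvF' : c' < (inner ℝ u' v : ℝ) := (hv F' u' c' hF'fac hsup').2.2 ⟨hneS, hnN, hnF⟩
    have hwc' : (inner ℝ u' w : ℝ) = c' := by
      have h' := hwF'
      rw [hsup'.2] at h'
      exact h'.2
    set t : ℝ := max 1 ((cw - (inner ℝ uw v : ℝ)) / ((inner ℝ u' v : ℝ) - c') + 1) with ht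
    have hδ : (0:ℝ) < (inner ℝ u' v : ℝ) - c' := by linarith
    have ht1 : (1:ℝ) ≤ t := le_max_left _ _
    have htv : cw + t * c' < (inner ℝ uw v : ℝ) + t * (inner ℝ u' v : ℝ) := by
      have h2 : (cw - (inner ℝ uw v : ℝ)) / ((inner ℝ u' v : ℝ) - c') + 1 ≤ t := le_max_right _ _
      have h3 : (cw - (inner ℝ uw v : ℝ)) / ((inner ℝ u' v : ℝ) - c') < t := by linarith
      have h4 : cw - (inner ℝ uw v : ℝ) < t * ((inner ℝ u' v : ℝ) - c') := (div_lt_iff₀ hδ).1 h3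
      nlinarith
    have hinner : ∀ x : Pt d,
        (inner ℝ (uw + t • u') x : ℝ) = (inner ℝ uw x : ℝ) + t * (inner ℝ u' x : ℝ) := by
      intro x; rw [inner_add_left, real_inner_smul_left]
    apply aux_isVertex_of_exposing (u := uw + t • u') (c := cw + t * c')
    · intro a ha
      rw [hinner]
      rcases Finset.mem_insert.1 ha with rfl | haV
      · linarith
      · have h5 := hwsup a (hVP haV)
        have h6 := hsup'.1 a (hVP haV)
        nlinarith
    · intro a ha hac
      rw [hinner] at hac
      rcases Finset.mem_insert.1 ha with rfl | haV
      · exfalso; linarith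
      · have h5 := hwsup a (hVP haV)
        have h6 := hsup'.1 a (hVP haV)
        have h7 : (inner ℝ uw a : ℝ) = cw := by nlinarith
        have h8 : a ∈ ({w} : Set (Pt d)) := by
          rw [hwext]
          exact ⟨hVP haV, h7⟩
        exact h8
    · exact hPQ hwP.1
    · rw [hinner, hwP.2, hwc']
  have hset : {w | IsVertex (pseudoStack P v) w} = insert v {w | IsVertex P w} := by
    ext w
    simp only [Set.mem_setOf_eq, Set.mem_insert_iff, hQA]
    constructor
    · intro hw
      rcases Finset.mem_insert.1 (aux_vertex_mem hw) with rfl | haV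
      · exact Or.inl rfl
      · exact Or.inr (aux_isVertex_of_subset hPQ (hVP haV) hw)
    · rintro (rfl | hw)
      · exact hvvert
      · exact hPsubQ w hw
  have hVPfin : {w | IsVertex P w}.Finite := by
    apply Set.Finite.subset V.finite_toSet
    intro w hw
    exact Finset.mem_coe.2 (aux_vertex_mem (show IsVertex (convexHull ℝ (V : Set (Pt d))) w from hPV ▸ hw))
  rw [aux_fk_zero, aux_fk_zero, hset]
  exact Set.ncard_insert_of_notMem (fun hvv => hvP (aux_isVertex_mem hvv)) hVPfin
end
end
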